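/- arXiv:1707.07871 — 3 statements merged into one kernel-verified Lean document; each statement's English description precedes it below -/
import Mathlib

section
/- The following three bounds hold: (a) √(t_1 - t_0) ≤ 3π/(√2·k·g(t_1)) (where t_0 = -1); (b) √(t_k - t_{k-1}) ≤ π/(k·g(1)) (where t_k = 1); (c) for every j ∈ {0,1,…,k-1}, t_{j+1} - t_j ≤ (12π/k)^{1/3}. -/
open Real MeasureTheory

open intervalIntegral in
lemma aux_int_sqrt (a b : ℝ) (h : a ≤ b) :
    ∫ s in a..b, Real.sqrt (s - a) = 2 / 3 * ((b - a) * Real.sqrt (b - a)) := by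
  have h0 : 0 ≤ b - a := by linarith
  have h1 : (∫ s in a..b, Real.sqrt (s - a)) = ∫ x in a - a..b - a, Real.sqrt x :=
    integral_comp_sub_right (fun x => Real.sqrt x) a
  rw [h1, show a - a = 0 by ring,
    integral_congr (g := fun x : ℝ => x ^ (1/2 : ℝ)) (fun x _ => Real.sqrt_eq_rpow x),
    integral_rpow (Or.inl (by norm_num))]
  rw [Real.zero_rpow (by norm_num), show (1/2 + 1 : ℝ) = 1 + 1/2 by norm_num,
    Real.rpow_add' h0 (by norm_num), Real.rpow_one, Real.sqrt_eq_rpow]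
  ring

open intervalIntegral in
lemma aux_int_one_sub (c r : ℝ) (hr : -1 < r) (hr' : r + 1 ≠ 0) :
    ∫ s in c..(1:ℝ), (1 - s) ^ r = (1 - c) ^ (r + 1) / (r + 1) := by
  have h1 : (∫ s in c..(1:ℝ), (1 - s) ^ r) = ∫ x in (1 - 1)..(1 - c), (x : ℝ) ^ r :=
    integral_comp_sub_left (fun x : ℝ => x ^ r) 1
  rw [h1, show (1:ℝ) - 1 = 0 by ring, integral_rpow (Or.inl hr), Real.zero_rpow hr', sub_zero]

lemma aux_intg_one_sub (c r : ℝ) (hr : -1 < r) :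
    IntervalIntegrable (fun s : ℝ => (1 - s) ^ r) volume c 1 := by
  have := (intervalIntegral.intervalIntegrable_rpow' (a := 1 - c) (b := 1 - 1) hr).comp_sub_left 1
  simpa using this


lemma aux_key (p q x r : ℝ) (hpx : p ≤ x) (hxq : x ≤ q) (hrx : r ^ 2 = q ^ 2 - x ^ 2) :
    q * (p + q) ≤ x * (p + q) + r ^ 2 := by
  nlinarith [mul_nonneg (sub_nonneg.mpr hpx) (sub_nonneg.mpr hxq)]

lemma aux_final_b (G p q x r : ℝ) (hG : 0 ≤ G) (hr : 0 < r) (hpq : 0 < p + q)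
    (key : q * (p + q) ≤ x * (p + q) + r ^ 2) :
    G * (q * (p + q) - r ^ 2) / (2 * r * (p + q)) ≤ G * x / (2 * r) := by
  rw [div_le_div_iff₀ (by positivity) (by positivity)]
  nlinarith [mul_le_mul_of_nonneg_left key (by positivity : (0:ℝ) ≤ 2 * G * r)]


lemma aux_c_small (K d : ℝ) (h0 : 0 < K) (h4 : K ≤ 4) (hd0 : 0 ≤ d) (hd2 : d ≤ 2) :
    d ^ 3 ≤ 12 * Real.pi / K := by
  have h8 : d ^ 3 ≤ 8 := by
    calc d ^ 3 ≤ 2 ^ 3 := pow_le_pow_left₀ hd0 hd2 3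
      _ = 8 := by norm_num
  have h12 : (8:ℝ) ≤ 12 * Real.pi / K := by
    rw [le_div_iff₀ h0]
    nlinarith [Real.pi_gt_three]
  linarith

lemma aux_c_large (K d : ℝ) (hK : 5 ≤ K) (h : d ≤ 18 * Real.pi ^ 2 / K ^ 2) :
    d ≤ 12 * Real.pi / K := by
  have h0 : (0:ℝ) < K := by linarith
  have hπ := Real.pi_pos
  have h18 : 18 * Real.pi ≤ 12 * K := by nlinarith [Real.pi_lt_d2]
  have hcmp : 18 * Real.pi ^ 2 / K ^ 2 ≤ 12 * Real.pi / K := by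
    rw [div_le_div_iff₀ (by positivity) h0]
    nlinarith [mul_nonneg (mul_nonneg hπ.le h0.le) (by linarith : (0:ℝ) ≤ 12 * K - 18 * Real.pi)]
  linarith

set_option maxHeartbeats 4000000 in
theorem stmt_16 (k : ℕ) (hk : 2 ≤ k) (g : ℝ → ℝ)
    (hg0 : ∀ x ∈ Set.Icc (-1:ℝ) 1, 0 ≤ g x)
    (hgmono : MonotoneOn g (Set.Icc (-1:ℝ) 1))
    (hgconc : ConcaveOn ℝ (Set.Icc (-1:ℝ) 1) g)
    (hgconv : ConvexOn ℝ (Set.Ioo (-1:ℝ) 1) (fun s => g s / (1 + s)))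
    (hnorm : (1 / π) * ∫ s in (-1:ℝ)..1, g s / Real.sqrt (1 - s ^ 2) = 1)
    (t : ℕ → ℝ)
    (ht0 : t 0 = -1) (htk : t k = 1)
    (htmem : ∀ j ≤ k, t j ∈ Set.Icc (-1:ℝ) 1)
    (htmono : ∀ i j : ℕ, i < j → j ≤ k → t i < t j)
    (htW : ∀ j ≤ k,
      ((k : ℝ) / π) * ∫ s in (-1:ℝ)..(t j), g s / Real.sqrt (1 - s ^ 2) = (j : ℝ))
    :
    (Real.sqrt (t 1 - t 0) ≤ 3 * π / (Real.sqrt 2 * (k : ℝ) * g (t 1))) ∧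
    (Real.sqrt (t k - t (k - 1)) ≤ π / ((k : ℝ) * g 1)) ∧
    (∀ j : ℕ, j < k → t (j + 1) - t j ≤ (12 * π / (k : ℝ)) ^ ((1 : ℝ) / 3)) := by
  have hπ : (0:ℝ) < π := Real.pi_pos
  have hπ' : (π:ℝ) ≠ 0 := ne_of_gt hπ
  have hk2 : (2:ℝ) ≤ (k:ℝ) := by exact_mod_cast hk
  have hk0 : (0:ℝ) < (k:ℝ) := by linarith
  have hk0' : (k:ℝ) ≠ 0 := ne_of_gt hk0
  set f : ℝ → ℝ := fun s => g s / Real.sqrt (1 - s ^ 2) with hfdef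
  -- integrability of f on [-1,1]
  have hInt : IntervalIntegrable f volume (-1) 1 := by
    by_contra hcon
    have h := htW k le_rfl
    rw [htk, intervalIntegral.integral_undef hcon] at h
    simp only [mul_zero] at h
    rw [← h] at hk2; norm_num at hk2
  have hsub : ∀ u v : ℝ, -1 ≤ u → u ≤ 1 → -1 ≤ v → v ≤ 1 → IntervalIntegrable f volume u v := by
    intro u v hu hu' hv hv'
    refine hInt.mono_set ?_
    rw [Set.uIcc_of_le (by norm_num : (-1:ℝ) ≤ 1)]
    exact Set.uIcc_subset_Icc ⟨hu, hu'⟩ ⟨hv, hv'⟩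
  have hIval : ∀ j, j ≤ k → (∫ s in (-1:ℝ)..(t j), f s) = j * π / k := by
    intro j hj
    have h := htW j hj
    rw [div_mul_eq_mul_div, div_eq_iff hπ'] at h
    rw [eq_div_iff hk0']
    linarith [h]
  have hIgap : ∀ j, j + 1 ≤ k → (∫ s in (t j)..(t (j+1)), f s) = π / k := by
    intro j hj
    have hj' : j ≤ k := by omega
    have h1 := hIval j hj'
    have h2 := hIval (j+1) hj
    have hadd := intervalIntegral.integral_add_adjacent_intervals
      (hsub (-1) (t j) (by norm_num) (by norm_num) (htmem j hj').1 (htmem j hj').2)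
      (hsub (t j) (t (j+1)) (htmem j hj').1 (htmem j hj').2 (htmem (j+1) hj).1 (htmem (j+1) hj).2)
    rw [h1, h2] at hadd
    push_cast at hadd
    rw [eq_div_iff hk0']
    field_simp at hadd
    linarith [hadd]
  have hfnn : ∀ s, s ∈ Set.Icc (-1:ℝ) 1 → 0 ≤ f s := fun s hs =>
    div_nonneg (hg0 s hs) (Real.sqrt_nonneg _)
  -- chord bound from concavity
  have hchord : ∀ y, y ∈ Set.Icc (-1:ℝ) 1 → -1 < y → ∀ s, s ∈ Set.Icc (-1:ℝ) y →
      (1 + s) / (1 + y) * g y ≤ g s := by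
    intro y hy hy1 s hs
    have h0 : (0:ℝ) < 1 + y := by linarith
    have hl0 : 0 ≤ (y - s) / (1 + y) := div_nonneg (by linarith [hs.2]) h0.le
    have hm0 : 0 ≤ (1 + s) / (1 + y) := div_nonneg (by linarith [hs.1]) h0.le
    have hsum : (y - s) / (1 + y) + (1 + s) / (1 + y) = 1 := by field_simp; ring
    have hm1 : (-1:ℝ) ∈ Set.Icc (-1:ℝ) 1 := by constructor <;> norm_num
    have hcomb := hgconc.2 hm1 hy hl0 hm0 hsum
    have harg : ((y - s) / (1 + y)) • (-1:ℝ) + ((1 + s) / (1 + y)) • y = s := by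
      simp only [smul_eq_mul]; field_simp; ring
    rw [harg] at hcomb
    have hgm1 : 0 ≤ g (-1) := hg0 _ hm1
    simp only [smul_eq_mul] at hcomb
    nlinarith [hcomb, mul_nonneg hl0 hgm1]
  have ht1mem := htmem 1 (by omega)
  have ht1lo : (-1:ℝ) < t 1 := by rw [← ht0]; exact htmono 0 1 (by omega) (by omega)
  have ht1hi : t 1 < 1 := by rw [← htk]; exact htmono 1 k (by omega) le_rfl
  -- positivity of g at t 1 and 1
  have hgpos : ∀ y, y ∈ Set.Icc (-1:ℝ) 1 → t 1 ≤ y → 0 < g y := by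
    intro y hy hty
    by_contra hcon
    push_neg at hcon
    have h1 := hIval 1 (by omega)
    have hzero : Set.EqOn f 0 (Set.uIcc (-1:ℝ) (t 1)) := by
      intro s hs
      rw [Set.uIcc_of_le ht1lo.le] at hs
      have hsIcc : s ∈ Set.Icc (-1:ℝ) 1 := ⟨hs.1, le_trans hs.2 ht1hi.le⟩
      have hgs : g s ≤ 0 := le_trans (hgmono hsIcc hy (le_trans hs.2 hty)) hcon
      have : g s = 0 := le_antisymm hgs (hg0 s hsIcc)
      simp [hfdef, this]
    rw [intervalIntegral.integral_congr hzero] at h1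
    simp only [Pi.zero_apply, intervalIntegral.integral_zero, Nat.cast_one, one_mul] at h1
    have hpk : 0 < π / k := div_pos hπ hk0
    rw [← h1] at hpk
    norm_num at hpk
  have hgt1 : 0 < g (t 1) := hgpos (t 1) ht1mem le_rfl
  have hg1 : 0 < g 1 := hgpos 1 (by constructor <;> norm_num) ht1hi.le

  -- part (a)
  have parta : Real.sqrt (t 1 - t 0) ≤ 3 * π / (Real.sqrt 2 * (k:ℝ) * g (t 1)) := by
    set b := t 1 with hb
    have hb1 : (0:ℝ) < 1 + b := by linarith
    have hs2 : (0:ℝ) < Real.sqrt 2 := Real.sqrt_pos.mpr (by norm_num)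
    set C : ℝ := g b / ((1 + b) * Real.sqrt 2) with hC
    have hgap := hIgap 0 (by omega)
    rw [ht0] at hgap
    have hptwise : ∀ s ∈ Set.Icc (-1:ℝ) b, C * Real.sqrt (s - (-1)) ≤ f s := by
      intro s hs
      rcases eq_or_lt_of_le hs.1 with heq | hlt
      · rw [← heq]
        have h0 : Real.sqrt ((-1:ℝ) - (-1)) = 0 := by norm_num
        rw [h0, mul_zero]
        exact hfnn (-1) (by constructor <;> norm_num)
      · have hs1 : s < 1 := lt_of_le_of_lt hs.2 ht1hi
        have hx : (0:ℝ) < 1 + s := by linarith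
        have h1s : (0:ℝ) < 1 - s := by linarith
        set x := Real.sqrt (1 + s) with hxdef
        have hxpos : 0 < x := Real.sqrt_pos.mpr hx
        have hx2 : x ^ 2 = 1 + s := Real.sq_sqrt hx.le
        have hsq : Real.sqrt (1 - s ^ 2) = Real.sqrt (1 - s) * x := by
          rw [show (1 : ℝ) - s ^ 2 = (1 - s) * (1 + s) by ring, Real.sqrt_mul h1s.le]
        have hden : Real.sqrt (1 - s ^ 2) ≤ Real.sqrt 2 * x := by
          rw [hsq]
          exact mul_le_mul_of_nonneg_right (Real.sqrt_le_sqrt (by linarith)) (Real.sqrt_nonneg _)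
        have hdpos : 0 < Real.sqrt (1 - s ^ 2) := by
          rw [hsq]; positivity
        have hchd := hchord b ht1mem ht1lo s hs
        have hstep : ((1 + s) / (1 + b) * g b) / (Real.sqrt 2 * x) ≤ f s :=
          div_le_div₀ (hg0 s ⟨hs.1, hs1.le⟩) hchd hdpos hden
        refine le_trans (le_of_eq ?_) hstep
        rw [show s - (-1) = 1 + s by ring, ← hxdef, ← hx2, hC]
        field_simp
    have hlow : IntervalIntegrable (fun s => C * Real.sqrt (s - (-1))) volume (-1) b :=
      (continuous_const.mul (Real.continuous_sqrt.comp
        (continuous_id.sub continuous_const))).intervalIntegrable _ _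
    have hmono := intervalIntegral.integral_mono_on ht1lo.le hlow
      (hsub (-1) b (by norm_num) (by norm_num) ht1mem.1 ht1mem.2) hptwise
    rw [intervalIntegral.integral_const_mul, aux_int_sqrt (-1) b ht1lo.le, hgap] at hmono
    set X := Real.sqrt (b - -1) with hX
    have hXnn : 0 ≤ X := Real.sqrt_nonneg _
    have hEq : C * (2 / 3 * ((b - -1) * X)) = 2 * g b * X / (3 * Real.sqrt 2) := by
      rw [hC, show b - -1 = 1 + b by ring]; field_simp
    rw [hEq, div_le_div_iff₀ (by positivity) hk0] at hmono
    rw [ht0, ← hX, le_div_iff₀ (by positivity : (0:ℝ) < Real.sqrt 2 * (k:ℝ) * g b)]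
    nlinarith [mul_le_mul_of_nonneg_left hmono hs2.le, Real.sq_sqrt (by norm_num : (0:ℝ) ≤ 2),
      hgt1, hXnn, hk0]

  -- part (b) core estimate
  have hs2 : (0:ℝ) < Real.sqrt 2 := Real.sqrt_pos.mpr (by norm_num)
  have hq2 : Real.sqrt 2 ^ 2 = 2 := Real.sq_sqrt (by norm_num)
  have hB : ∀ a : ℝ, -1 < a → a < 1 →
      g 1 * (Real.sqrt (1 - a) * (2 * Real.sqrt 2 + Real.sqrt (1 + a))) / 3
        ≤ ∫ s in a..(1:ℝ), f s := by
    intro a ha hA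
    set p := Real.sqrt (1 + a) with hp
    set q := Real.sqrt 2 with hq
    have hq0 : (0:ℝ) < q := hs2
    have hp0 : (0:ℝ) < p := Real.sqrt_pos.mpr (by linarith)
    have hp2 : p ^ 2 = 1 + a := Real.sq_sqrt (by linarith)
    have hpq : p ≤ q := Real.sqrt_le_sqrt (by linarith)
    have hpq0 : (0:ℝ) < p + q := by linarith
    have hLint : IntervalIntegrable
        (fun s => (g 1 / 2 * q) * (1 - s) ^ (-(1/2) : ℝ)
          - (g 1 / (2 * (p + q))) * (1 - s) ^ ((1/2) : ℝ)) volume a 1 :=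
      ((aux_intg_one_sub a (-(1/2)) (by norm_num)).const_mul _).sub
        ((aux_intg_one_sub a (1/2) (by norm_num)).const_mul _)
    have hptwise : ∀ s ∈ Set.Icc a (1:ℝ),
        (g 1 / 2 * q) * (1 - s) ^ (-(1/2) : ℝ)
          - (g 1 / (2 * (p + q))) * (1 - s) ^ ((1/2) : ℝ) ≤ f s := by
      intro s hs
      rcases eq_or_lt_of_le hs.2 with heq | hs1
      · rw [heq, sub_self, Real.zero_rpow (by norm_num), Real.zero_rpow (by norm_num)]
        simpa using hfnn 1 (by constructor <;> norm_num)
      · have hsm1 : -1 < s := lt_of_lt_of_le ha hs.1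
        have h1s : (0:ℝ) < 1 - s := by linarith
        have h1x : (0:ℝ) < 1 + s := by linarith
        set x := Real.sqrt (1 + s) with hx
        set r := Real.sqrt (1 - s) with hr
        have hx0 : 0 < x := Real.sqrt_pos.mpr h1x
        have hr0 : 0 < r := Real.sqrt_pos.mpr h1s
        have hx2 : x ^ 2 = 1 + s := Real.sq_sqrt h1x.le
        have hr2 : r ^ 2 = 1 - s := Real.sq_sqrt h1s.le
        have hxq : x ≤ q := Real.sqrt_le_sqrt (by linarith)
        have hpx : p ≤ x := Real.sqrt_le_sqrt (by linarith [hs.1])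
        have e1 : (1 - s) ^ (-(1/2) : ℝ) = 1 / r := by
          rw [show (-(1/2) : ℝ) = -(1/2) from rfl, Real.rpow_neg h1s.le,
            ← Real.sqrt_eq_rpow, one_div]
        have e2 : (1 - s) ^ ((1/2) : ℝ) = r := by
          rw [← Real.sqrt_eq_rpow]
        have hsq : Real.sqrt (1 - s ^ 2) = r * x := by
          rw [show (1:ℝ) - s ^ 2 = (1 - s) * (1 + s) by ring, Real.sqrt_mul h1s.le]
        have hdpos : 0 < Real.sqrt (1 - s ^ 2) := by rw [hsq]; positivity
        have hchd := hchord 1 (by constructor <;> norm_num) (by norm_num) s ⟨hsm1.le, hs1.le⟩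
        have hfs : g 1 * x / (2 * r) ≤ f s := by
          have h1 : ((1 + s) / (1 + 1) * g 1) / Real.sqrt (1 - s ^ 2)
              ≤ g s / Real.sqrt (1 - s ^ 2) := (div_le_div_iff_of_pos_right hdpos).mpr hchd
          have h2 : ((1 + s) / (1 + 1) * g 1) / Real.sqrt (1 - s ^ 2) = g 1 * x / (2 * r) := by
            rw [hsq, ← hx2]; field_simp; ring
          simp only [hfdef]
          rw [← h2]
          exact h1
        have hrx : r ^ 2 = q ^ 2 - x ^ 2 := by rw [hr2, hq2, hx2]; ring
        have expand : (g 1 / 2 * q) * (1 / r) - (g 1 / (2 * (p + q))) * r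
            = g 1 * (q * (p + q) - r ^ 2) / (2 * r * (p + q)) := by
          field_simp
        rw [e1, e2, expand]
        exact le_trans (aux_final_b (g 1) p q x r hg1.le hr0 hpq0
          (aux_key p q x r hpx hxq hrx)) hfs
    have hmono := intervalIntegral.integral_mono_on hA.le hLint
      (hsub a 1 ha.le hA.le (by norm_num) (by norm_num)) hptwise
    have hint1 : (∫ s in a..(1:ℝ), (1 - s) ^ (-(1/2) : ℝ)) = 2 * Real.sqrt (1 - a) := by
      rw [aux_int_one_sub a (-(1/2)) (by norm_num) (by norm_num),
        show (-(1/2) + 1 : ℝ) = 1/2 by norm_num, ← Real.sqrt_eq_rpow]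
      ring
    have hint2 : (∫ s in a..(1:ℝ), (1 - s) ^ ((1/2) : ℝ))
        = 2 / 3 * ((1 - a) * Real.sqrt (1 - a)) := by
      rw [aux_int_one_sub a (1/2) (by norm_num) (by norm_num),
        show ((1:ℝ)/2 + 1 : ℝ) = 1 + 1/2 by norm_num,
        Real.rpow_add' (by linarith) (by norm_num), Real.rpow_one, ← Real.sqrt_eq_rpow]
      ring
    have hILsub : (∫ s in a..(1:ℝ), ((g 1 / 2 * q) * (1 - s) ^ (-(1/2) : ℝ)
          - (g 1 / (2 * (p + q))) * (1 - s) ^ ((1/2) : ℝ)))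
        = (g 1 / 2 * q) * (2 * Real.sqrt (1 - a))
          - (g 1 / (2 * (p + q))) * (2 / 3 * ((1 - a) * Real.sqrt (1 - a))) := by
      rw [intervalIntegral.integral_sub ((aux_intg_one_sub a (-(1/2)) (by norm_num)).const_mul _)
        ((aux_intg_one_sub a (1/2) (by norm_num)).const_mul _),
        intervalIntegral.integral_const_mul, intervalIntegral.integral_const_mul, hint1, hint2]
    rw [hILsub] at hmono
    refine le_trans (le_of_eq ?_) hmono
    have hm : 1 - a = (q - p) * (q + p) := by nlinarith [hp2, hq2]
    rw [hm]
    field_simp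
    ring


  -- part (b)
  have hkm1mem := htmem (k-1) (by omega)
  have hkm1lo : -1 < t (k-1) := by
    rw [← ht0]; exact htmono 0 (k-1) (by omega) (by omega)
  have hkm1hi : t (k-1) < 1 := by
    rw [← htk]; exact htmono (k-1) k (by omega) le_rfl
  have partb : Real.sqrt (t k - t (k-1)) ≤ π / ((k:ℝ) * g 1) := by
    set a := t (k-1) with ha
    have hgap : (∫ s in a..(1:ℝ), f s) = π / k := by
      have h := hIgap (k-1) (by omega)
      rw [show k - 1 + 1 = k by omega, htk] at h
      exact h
    have hkey : g 1 * Real.sqrt (1 - a) ≤ π / k := by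
      rcases le_or_gt (3 - 2 * Real.sqrt 2) (Real.sqrt (1 + a)) with hcase | hcase
      · have hb := hB a hkm1lo hkm1hi
        rw [hgap] at hb
        nlinarith [hb, mul_nonneg (mul_nonneg hg1.le (Real.sqrt_nonneg (1 - a)))
          (show (0:ℝ) ≤ 2 * Real.sqrt 2 + Real.sqrt (1 + a) - 3 by linarith)]
      · have h141 : (1.41:ℝ) ≤ Real.sqrt 2 := (Real.le_sqrt (by norm_num) (by norm_num)).mpr (by norm_num)
        have hpa2 : Real.sqrt (1 + a) ^ 2 = 1 + a := Real.sq_sqrt (by linarith)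
        have hp018 : Real.sqrt (1 + a) < 0.18 := by linarith
        have haval : a < -9/10 := by
          nlinarith [hpa2, mul_self_lt_mul_self (Real.sqrt_nonneg (1 + a)) hp018]
        have hsplit := intervalIntegral.integral_add_adjacent_intervals
          (hsub a (-9/10) hkm1lo.le hkm1hi.le (by norm_num) (by norm_num))
          (hsub (-9/10) 1 (by norm_num) (by norm_num) (by norm_num) (by norm_num))
        have hpos1 : 0 ≤ ∫ s in a..(-9/10:ℝ), f s :=
          intervalIntegral.integral_nonneg (by linarith)
            (fun u hu => hfnn u ⟨by linarith [hu.1], by linarith [hu.2]⟩)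
        have hb9 := hB (-9/10) (by norm_num) (by norm_num)
        rw [show (1:ℝ) - (-9/10) = 19/10 by norm_num,
          show (1:ℝ) + (-9/10) = 1/10 by norm_num] at hb9
        have hup : (∫ s in (-9/10:ℝ)..1, f s) ≤ π / k := by
          rw [← hgap, ← hsplit]; linarith
        have h137 : (1.37:ℝ) ≤ Real.sqrt (19/10) :=
          (Real.le_sqrt (by norm_num) (by norm_num)).mpr (by norm_num)
        have h031 : (0.31:ℝ) ≤ Real.sqrt (1/10) :=
          (Real.le_sqrt (by norm_num) (by norm_num)).mpr (by norm_num)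
        have h1415 : Real.sqrt 2 ≤ 1.4143 :=
          (Real.sqrt_le_left (by norm_num)).mpr (by norm_num)
        have hsqa : Real.sqrt (1 - a) ≤ Real.sqrt 2 := Real.sqrt_le_sqrt (by linarith)
        have hnum : (1.4143:ℝ) ≤ Real.sqrt (19/10) * (2 * Real.sqrt 2 + Real.sqrt (1/10)) / 3 := by
          nlinarith [mul_nonneg (sub_nonneg.mpr h137)
            (by positivity : (0:ℝ) ≤ 2 * Real.sqrt 2 + Real.sqrt (1/10)), h141, h031]
        have hstep1 : g 1 * Real.sqrt (1 - a) ≤ g 1 * 1.4143 :=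
          mul_le_mul_of_nonneg_left (hsqa.trans h1415) hg1.le
        have hstep2 : g 1 * 1.4143 ≤ g 1 * (Real.sqrt (19/10) * (2 * Real.sqrt 2 + Real.sqrt (1/10)) / 3) :=
          mul_le_mul_of_nonneg_left hnum hg1.le
        nlinarith [hstep1, hstep2, hb9, hup]
    rw [le_div_iff₀ hk0] at hkey
    rw [htk, le_div_iff₀ (by positivity : (0:ℝ) < (k:ℝ) * g 1)]
    nlinarith [hkey]

  -- normalization forces g 1 ≥ 1
  have hεn : ∀ n : ℕ, 0 < 1/((n:ℝ)+2) ∧ 1/((n:ℝ)+2) ≤ 1/2 := by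
    intro n
    have h0 : (0:ℝ) ≤ (n:ℝ) := Nat.cast_nonneg n
    constructor
    · positivity
    · rw [div_le_div_iff₀ (by positivity) (by norm_num)]
      linarith
  have hg11 : 1 ≤ g 1 := by
    set F : ℝ → ℝ := fun x => ∫ s in (-1:ℝ)..x, f s with hF
    have hFcont : ContinuousOn F (Set.uIcc (-1:ℝ) 1) :=
      intervalIntegral.continuousOn_primitive_interval' hInt Set.left_mem_uIcc
    have hF1 : F 1 = π := by
      have h := hIval k le_rfl
      rw [htk] at h
      simp only [hF]
      rw [h]
      field_simp
    have hFm1 : F (-1) = 0 := intervalIntegral.integral_same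
    have hbound : ∀ n : ℕ, F (1 - 1/((n:ℝ)+2)) - F (-1 + 1/((n:ℝ)+2)) ≤ g 1 * π := by
      intro n
      obtain ⟨hε0, hε2⟩ := hεn n
      set ε : ℝ := 1/((n:ℝ)+2) with hε
      set u : ℝ := -1 + ε with hu
      set v : ℝ := 1 - ε with hv
      have huv : u ≤ v := by rw [hu, hv]; linarith
      have hu1 : -1 < u := by rw [hu]; linarith
      have hv1 : v < 1 := by rw [hv]; linarith
      have huI : -1 ≤ u ∧ u ≤ 1 := ⟨hu1.le, by rw [hu]; linarith⟩
      have hvI : -1 ≤ v ∧ v ≤ 1 := ⟨by rw [hv]; linarith, hv1.le⟩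
      have hFd : F v - F u = ∫ s in u..v, f s := by
        have hadd := intervalIntegral.integral_add_adjacent_intervals
          (hsub (-1) u (by norm_num) (by norm_num) huI.1 huI.2)
          (hsub u v huI.1 huI.2 hvI.1 hvI.2)
        simp only [hF]
        linarith [hadd]
      have hderiv : ∀ x ∈ Set.uIcc u v, HasDerivAt Real.arcsin (1 / Real.sqrt (1 - x^2)) x := by
        intro x hx
        rw [Set.uIcc_of_le huv] at hx
        have hx1 : -1 < x := lt_of_lt_of_le hu1 hx.1
        have hx2 : x < 1 := lt_of_le_of_lt hx.2 hv1
        exact Real.hasDerivAt_arcsin hx1.ne' hx2.ne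
      have hcont1 : ContinuousOn (fun x : ℝ => 1 / Real.sqrt (1 - x^2)) (Set.uIcc u v) := by
        apply ContinuousOn.div continuousOn_const
        · exact (Real.continuous_sqrt.comp (by continuity)).continuousOn
        · intro x hx
          rw [Set.uIcc_of_le huv] at hx
          have hx1 : -1 < x := lt_of_lt_of_le hu1 hx.1
          have hx2 : x < 1 := lt_of_le_of_lt hx.2 hv1
          have hpos : (0:ℝ) < 1 - x^2 := by
            calc (0:ℝ) < (1 - x) * (1 + x) :=
                  mul_pos (by linarith) (by linarith)
              _ = 1 - x^2 := by ring
          exact ne_of_gt (Real.sqrt_pos.mpr hpos)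
      have harc : (∫ x in u..v, 1 / Real.sqrt (1 - x^2)) = Real.arcsin v - Real.arcsin u :=
        intervalIntegral.integral_eq_sub_of_hasDerivAt hderiv hcont1.intervalIntegrable
      have hle : (∫ s in u..v, f s) ≤ ∫ x in u..v, g 1 * (1 / Real.sqrt (1 - x^2)) := by
        apply intervalIntegral.integral_mono_on huv (hsub u v huI.1 huI.2 hvI.1 hvI.2)
          (continuousOn_const.mul hcont1).intervalIntegrable
        intro x hx
        have hx1 : -1 < x := lt_of_lt_of_le hu1 hx.1
        have hx2 : x < 1 := lt_of_le_of_lt hx.2 hv1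
        have hpos0 : (0:ℝ) < 1 - x^2 := by
          calc (0:ℝ) < (1 - x) * (1 + x) := mul_pos (by linarith) (by linarith)
            _ = 1 - x^2 := by ring
        have hpos : (0:ℝ) < Real.sqrt (1 - x^2) := Real.sqrt_pos.mpr hpos0
        have hgx : g x ≤ g 1 := hgmono ⟨hx1.le, hx2.le⟩ ⟨by norm_num, le_refl 1⟩ hx2.le
        simp only [hfdef]
        show g x / √(1 - x ^ 2) ≤ g 1 * (1 / √(1 - x ^ 2))
        rw [mul_one_div]
        exact (div_le_div_iff_of_pos_right hpos).mpr hgx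
      calc F v - F u = ∫ s in u..v, f s := hFd
        _ ≤ ∫ x in u..v, g 1 * (1 / Real.sqrt (1 - x^2)) := hle
        _ = g 1 * (Real.arcsin v - Real.arcsin u) := by
            rw [intervalIntegral.integral_const_mul, harc]
        _ ≤ g 1 * π := by
            have h1 := Real.arcsin_le_pi_div_two v
            have h2 := Real.neg_pi_div_two_le_arcsin u
            exact mul_le_mul_of_nonneg_left (by linarith) hg1.le
    have hmemv : ∀ n : ℕ, (1 - 1/((n:ℝ)+2)) ∈ Set.uIcc (-1:ℝ) 1 := by
      intro n
      obtain ⟨h1, h2⟩ := hεn n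
      rw [Set.uIcc_of_le (by norm_num : (-1:ℝ) ≤ 1)]
      exact ⟨by linarith, by linarith⟩
    have hmemu : ∀ n : ℕ, (-1 + 1/((n:ℝ)+2)) ∈ Set.uIcc (-1:ℝ) 1 := by
      intro n
      obtain ⟨h1, h2⟩ := hεn n
      rw [Set.uIcc_of_le (by norm_num : (-1:ℝ) ≤ 1)]
      exact ⟨by linarith, by linarith⟩
    have hinv : Filter.Tendsto (fun n : ℕ => 1/((n:ℝ)+2)) Filter.atTop (nhds 0) := by
      have h1 : Filter.Tendsto (fun n : ℕ => ((n:ℝ)+2)) Filter.atTop Filter.atTop :=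
        Filter.tendsto_atTop_add_const_right _ 2 tendsto_natCast_atTop_atTop
      simpa [one_div, Function.comp_def] using tendsto_inv_atTop_zero.comp h1
    have htendv : Filter.Tendsto (fun n : ℕ => F (1 - 1/((n:ℝ)+2))) Filter.atTop (nhds (F 1)) := by
      refine ((hFcont 1 (by rw [Set.uIcc_of_le (by norm_num : (-1:ℝ) ≤ 1)]; exact ⟨by norm_num, le_refl 1⟩)).tendsto).comp ?_
      refine tendsto_nhdsWithin_of_tendsto_nhds_of_eventually_within _ ?_ (Filter.Eventually.of_forall hmemv)
      have h2 : Filter.Tendsto (fun n : ℕ => 1 - 1/((n:ℝ)+2)) Filter.atTop (nhds (1 - 0)) :=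
        Filter.Tendsto.sub tendsto_const_nhds hinv
      simpa using h2
    have htendu : Filter.Tendsto (fun n : ℕ => F (-1 + 1/((n:ℝ)+2))) Filter.atTop (nhds (F (-1))) := by
      refine ((hFcont (-1) Set.left_mem_uIcc).tendsto).comp ?_
      refine tendsto_nhdsWithin_of_tendsto_nhds_of_eventually_within _ ?_ (Filter.Eventually.of_forall hmemu)
      have h2 : Filter.Tendsto (fun n : ℕ => -1 + 1/((n:ℝ)+2)) Filter.atTop (nhds (-1 + 0)) :=
        Filter.Tendsto.add tendsto_const_nhds hinv
      simpa using h2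
    have hfinal := le_of_tendsto (htendv.sub htendu) (Filter.Eventually.of_forall hbound)
    rw [hF1, hFm1, sub_zero] at hfinal
    nlinarith [hfinal, hπ]

  refine ⟨parta, partb, ?_⟩
  intro j hj
  have hjmem := htmem j (by omega)
  have hj1mem := htmem (j+1) (by omega)
  have hab : t j < t (j+1) := htmono j (j+1) (by omega) (by omega)
  set a := t j with haa
  set b := t (j+1) with hbb
  have hΔ0 : (0:ℝ) ≤ b - a := by linarith
  have hgap := hIgap j (by omega)
  have hC : (0:ℝ) < 2 * Real.sqrt 2 := by positivity
  have hae : (fun s => g 1 / (2 * Real.sqrt 2) * Real.sqrt (s - a))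
      ≤ᵐ[volume.restrict (Set.Icc a b)] f := by
    have hone : ∀ᵐ x ∂(volume.restrict (Set.Icc a b)), x ≠ (1:ℝ) := by
      refine MeasureTheory.ae_restrict_of_ae ?_
      rw [MeasureTheory.ae_iff]
      have hset : {x : ℝ | ¬ x ≠ 1} = {1} := by ext x; simp
      rw [hset]
      exact measure_singleton 1
    filter_upwards [MeasureTheory.ae_restrict_mem measurableSet_Icc, hone] with s hs hs1
    have hsm1 : -1 ≤ s := le_trans hjmem.1 hs.1
    have hs1' : s < 1 := lt_of_le_of_ne (le_trans hs.2 hj1mem.2) hs1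
    rcases eq_or_lt_of_le hsm1 with heq | hgt
    · have ha1 : a = -1 := le_antisymm (heq ▸ hs.1) hjmem.1
      have : Real.sqrt (s - a) = 0 := by rw [← heq, ha1]; norm_num
      rw [this, mul_zero]
      exact hfnn s ⟨hsm1, hs1'.le⟩
    · have h1x : (0:ℝ) < 1 + s := by linarith
      have h1s : (0:ℝ) < 1 - s := by linarith
      set x := Real.sqrt (1 + s) with hx
      have hx0 : 0 < x := Real.sqrt_pos.mpr h1x
      have hx2 : x ^ 2 = 1 + s := Real.sq_sqrt h1x.le
      have hsq : Real.sqrt (1 - s ^ 2) = Real.sqrt (1 - s) * x := by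
        rw [show (1 : ℝ) - s ^ 2 = (1 - s) * (1 + s) by ring, Real.sqrt_mul h1s.le]
      have hden : Real.sqrt (1 - s ^ 2) ≤ Real.sqrt 2 * x := by
        rw [hsq]
        exact mul_le_mul_of_nonneg_right (Real.sqrt_le_sqrt (by linarith)) (Real.sqrt_nonneg _)
      have hdpos : 0 < Real.sqrt (1 - s ^ 2) := by rw [hsq]; positivity
      have hchd := hchord 1 (by constructor <;> norm_num) (by norm_num) s ⟨hgt.le, hs1'.le⟩
      have hstep : ((1 + s) / (1 + 1) * g 1) / (Real.sqrt 2 * x) ≤ f s :=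
        div_le_div₀ (hg0 s ⟨hsm1, hs1'.le⟩) hchd hdpos hden
      calc g 1 / (2 * Real.sqrt 2) * Real.sqrt (s - a)
          ≤ g 1 / (2 * Real.sqrt 2) * x :=
            mul_le_mul_of_nonneg_left (Real.sqrt_le_sqrt (by linarith [hjmem.1])) (by positivity)
        _ = ((1 + s) / (1 + 1) * g 1) / (Real.sqrt 2 * x) := by
            rw [← hx2]; field_simp; ring
        _ ≤ f s := hstep
  have hlowint : IntervalIntegrable (fun s => g 1 / (2 * Real.sqrt 2) * Real.sqrt (s - a))
      volume a b :=
    (continuous_const.mul (Real.continuous_sqrt.comp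
      (continuous_id.sub continuous_const))).intervalIntegrable _ _
  have hmono := intervalIntegral.integral_mono_ae_restrict hab.le hlowint
    (hsub a b hjmem.1 hjmem.2 hj1mem.1 hj1mem.2) hae
  rw [intervalIntegral.integral_const_mul, aux_int_sqrt a b hab.le, hgap] at hmono
  have hDnn : (0:ℝ) ≤ (b - a) * Real.sqrt (b - a) := by positivity
  have hmono2 : (b - a) * Real.sqrt (b - a) / (3 * Real.sqrt 2) ≤ π / k := by
    calc (b - a) * Real.sqrt (b - a) / (3 * Real.sqrt 2)
        = 1 / (2 * Real.sqrt 2) * (2 / 3 * ((b - a) * Real.sqrt (b - a))) := by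
          ring
      _ ≤ g 1 / (2 * Real.sqrt 2) * (2 / 3 * ((b - a) * Real.sqrt (b - a))) :=
          mul_le_mul_of_nonneg_right ((div_le_div_iff_of_pos_right hC).mpr hg11) (by positivity)
      _ ≤ π / k := hmono
  have hD : (b - a) * Real.sqrt (b - a) ≤ 3 * Real.sqrt 2 * π / k := by
    rw [div_le_div_iff₀ (by positivity) hk0] at hmono2
    rw [le_div_iff₀ hk0]
    linarith [hmono2]
  have hsqD : ((b - a) * Real.sqrt (b - a)) ^ 2 = (b - a) ^ 3 := by
    rw [mul_pow, Real.sq_sqrt hΔ0]; ring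
  have h3 : (b - a) ^ 3 ≤ 12 * π / k := by
    rcases le_or_gt (k:ℝ) 4 with hk4 | hk5
    · exact aux_c_small (k:ℝ) (b - a) hk0 hk4 hΔ0 (by linarith [hjmem.1, hj1mem.2])
    · have hk5' : (5:ℝ) ≤ (k:ℝ) := by
        have : 4 < k := by exact_mod_cast hk5
        exact_mod_cast this
      have hDsq := mul_self_le_mul_self hDnn hD
      have hval : (3 * Real.sqrt 2 * π / k) * (3 * Real.sqrt 2 * π / k)
          = 18 * π ^ 2 / (k:ℝ) ^ 2 := by
        rw [div_mul_div_comm,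
          show (3 * Real.sqrt 2 * π) * (3 * Real.sqrt 2 * π) = 9 * (Real.sqrt 2 ^ 2) * π ^ 2 by ring,
          hq2]
        ring
      rw [hval, ← pow_two, hsqD] at hDsq
      exact aux_c_large (k:ℝ) ((b - a) ^ 3) hk5' hDsq
  calc b - a = ((b - a) ^ (3:ℕ) : ℝ) ^ ((1:ℝ)/3) := by
        rw [← Real.rpow_natCast (b - a) 3, ← Real.rpow_mul hΔ0]
        norm_num
    _ ≤ (12 * π / (k:ℝ)) ^ ((1:ℝ)/3) :=
        Real.rpow_le_rpow (by positivity) (by exact_mod_cast h3) (by norm_num)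
end

section
/- For every j ∈ {0,1,…,k-2} one has 2/(3π) ≤ (t_{j+1} - t_j)/(t_{j+2} - t_{j+1}) ≤ 24·π·√2·√(3π/4 + 1). -/
set_option maxHeartbeats 1000000

open Real MeasureTheory Set


-- Lipschitz-type bound for sin
lemma sin_lip' {x y : ℝ} (hxy : x ≤ y) (h : y - x ≤ 2*π) :
    Real.sin y - Real.sin x ≤ y - x := by
  rw [Real.sin_sub_sin]
  have h1 : Real.sin ((y-x)/2) ≤ (y-x)/2 := Real.sin_le (by linarith)
  have h0 : 0 ≤ Real.sin ((y-x)/2) :=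
    Real.sin_nonneg_of_nonneg_of_le_pi (by linarith) (by linarith [Real.pi_pos])
  have hc : Real.cos ((y+x)/2) ≤ 1 := Real.cos_le_one _
  nlinarith

-- monotonicity of u ↦ u - sin u - 2/(3π²) u³ on [0,π]
lemma monoH : MonotoneOn (fun u : ℝ => u - Real.sin u - 2/(3*π^2)*u^3) (Set.Icc 0 π) := by
  have hπ := Real.pi_pos
  apply monotoneOn_of_deriv_nonneg (convex_Icc 0 π)
  · exact (Continuous.continuousOn (by continuity))
  · intro x hx
    have : HasDerivAt (fun u : ℝ => u - Real.sin u - 2/(3*π^2)*u^3)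
        (1 - Real.cos x - 2/(3*π^2)*(3*x^2)) x := by
      have h1 := (hasDerivAt_id x).sub (Real.hasDerivAt_sin x)
      have h2 : HasDerivAt (fun u : ℝ => 2/(3*π^2)*u^3) (2/(3*π^2)*(3*x^2)) x := by
        simpa using (hasDerivAt_pow 3 x).const_mul (2/(3*π^2))
      exact h1.sub h2
    exact this.differentiableAt.differentiableWithinAt
  · intro x hx
    rw [interior_Icc] at hx
    have hd : HasDerivAt (fun u : ℝ => u - Real.sin u - 2/(3*π^2)*u^3)
        (1 - Real.cos x - 2/(3*π^2)*(3*x^2)) x := by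
      have h1 := (hasDerivAt_id x).sub (Real.hasDerivAt_sin x)
      have h2 : HasDerivAt (fun u : ℝ => 2/(3*π^2)*u^3) (2/(3*π^2)*(3*x^2)) x := by
        simpa using (hasDerivAt_pow 3 x).const_mul (2/(3*π^2))
      exact h1.sub h2
    rw [hd.deriv]
    have hcos : Real.cos x ≤ 1 - 2/π^2 * x^2 :=
      Real.cos_le_one_sub_mul_cos_sq (by rw [abs_of_nonneg hx.1.le]; exact hx.2.le)
    have hπ2 : (0:ℝ) < π^2 := by positivity
    have : 2/(3*π^2)*(3*x^2) = 2/π^2 * x^2 := by field_simp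
    rw [this]
    linarith

lemma monoH2 {x y : ℝ} (hx : 0 ≤ x) (hxy : x ≤ y) (hy : y ≤ π) :
    2*(y^3 - x^3) ≤ 3*π^2*((y - Real.sin y) - (x - Real.sin x)) := by
  have h := monoH (Set.mem_Icc.2 ⟨hx, le_trans hxy hy⟩) (Set.mem_Icc.2 ⟨le_trans hx hxy, hy⟩) hxy
  simp only at h
  have hπ2 : (0:ℝ) < π^2 := by positivity
  have h' : 2/(3*π^2)*(y^3 - x^3) ≤ (y - Real.sin y) - (x - Real.sin x) := by linarith
  have h'' := mul_le_mul_of_nonneg_left h' (by positivity : (0:ℝ) ≤ 3*π^2)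
  have he : 3*π^2 * (2/(3*π^2)*(y^3 - x^3)) = 2*(y^3 - x^3) := by field_simp
  linarith [he ▸ h'']

lemma pi4_ge : (81:ℝ) ≤ π^4 := by
  nlinarith [Real.pi_gt_three, Real.pi_pos, sq_nonneg (π - 3), sq_nonneg (π^2 - 9)]

lemma coef1 : 3*π^3/2 ≤ 15*π^4/4 := by
  nlinarith [Real.pi_gt_three, Real.pi_pos, pow_pos Real.pi_pos 3]

lemma coef2 : 18*π^2 ≤ 15*π^4/4 := by
  nlinarith [Real.pi_gt_three, Real.pi_pos, sq_nonneg (π - 3), sq_nonneg (π^2 - 9)]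

lemma cube_lb {x y : ℝ} (hx : 0 ≤ x) (hxy : x ≤ y) : (y - x)*y^2 ≤ y^3 - x^3 := by
  nlinarith [mul_nonneg (mul_nonneg hx (sub_nonneg.2 hxy)) (by linarith : (0:ℝ) ≤ y + x)]

lemma endgame_upper (ua ub uc : ℝ) (h0 : 0 ≤ ua) (h1 : ua < ub) (h2 : ub < uc)
    (h3 : uc ≤ π) (hll : uc - ub ≤ ub - ua)
    (hC : (ub - ua) - (Real.sin ub - Real.sin ua) ≤ 2*(1 - Real.cos ub)*(uc - ub)) :
    Real.cos ua - Real.cos ub ≤ 15*π^4/8 * (Real.cos ub - Real.cos uc) := by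
  have hπ := Real.pi_pos
  have hπ3 := Real.pi_gt_three
  set L := ub - ua with hL
  set l := uc - ub with hl
  clear_value L l
  have hLpos : 0 < L := by simp only [hL]; linarith
  have hlpos : 0 < l := by simp only [hl]; linarith
  have hLπ : L ≤ π := by simp only [hL]; linarith
  have hlπ : l ≤ π := by simp only [hl]; linarith
  set m1 := (ua+ub)/2 with hm1
  set m2 := (ub+uc)/2 with hm2
  clear_value m1 m2
  have hN : Real.cos ua - Real.cos ub = 2 * Real.sin m1 * Real.sin (L/2) := by
    rw [Real.cos_sub_cos]
    have e1 : (ua - ub)/2 = -(L/2) := by rw [hL]; ring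
    rw [e1, Real.sin_neg, hm1]; ring
  have hD : Real.cos ub - Real.cos uc = 2 * Real.sin m2 * Real.sin (l/2) := by
    rw [Real.cos_sub_cos]
    have e1 : (ub - uc)/2 = -(l/2) := by rw [hl]; ring
    rw [e1, Real.sin_neg, hm2]; ring
  have hsL_pos : 0 < Real.sin (L/2) :=
    Real.sin_pos_of_pos_of_lt_pi (by linarith) (by linarith)
  have hsl_pos : 0 < Real.sin (l/2) :=
    Real.sin_pos_of_pos_of_lt_pi (by linarith) (by linarith)
  have hS1_pos : 0 < Real.sin m1 :=
    Real.sin_pos_of_pos_of_lt_pi (by rw [hm1]; linarith) (by rw [hm1]; linarith)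
  have hS2_pos : 0 < Real.sin m2 :=
    Real.sin_pos_of_pos_of_lt_pi (by rw [hm2]; linarith) (by rw [hm2]; linarith)
  have hsL_le : Real.sin (L/2) ≤ L/2 := Real.sin_le (by linarith)
  have hsL_le1 : Real.sin (L/2) ≤ 1 := Real.sin_le_one _
  have hS1_le1 : Real.sin m1 ≤ 1 := Real.sin_le_one _
  have hjorl : l/π ≤ Real.sin (l/2) := by
    have h := Real.mul_le_sin (x := l/2) (by linarith) (by linarith)
    have he : 2/π * (l/2) = l/π := by ring
    linarith [he ▸ h]
  have hlπs : l ≤ π * Real.sin (l/2) := by rw [div_le_iff₀ hπ] at hjorl; linarith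
  have hπ2 : (0:ℝ) < π^2 := by positivity
  have hub_pos : 0 < ub := by linarith
  have hub2 : (0:ℝ) < ub^2 := by positivity
  -- Step 1 : L ≤ 3π²/2 l
  have hr : L ≤ 3*π^2/2 * l := by
    have hmono2 : 2*(ub^3 - ua^3) ≤ 3*π^2*((ub - Real.sin ub) - (ua - Real.sin ua)) :=
      monoH2 h0 h1.le (by linarith)
    have hcube : (ub - ua) * ub^2 ≤ ub^3 - ua^3 := cube_lb h0 h1.le
    have hcos2 : 2*(1 - Real.cos ub) ≤ ub^2 := by
      have := Real.one_sub_sq_div_two_le_cos (x := ub); linarith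
    have s2 : 3*π^2*((ub - Real.sin ub) - (ua - Real.sin ua)) ≤ 3*π^2*(2*(1 - Real.cos ub)*l) := by
      apply mul_le_mul_of_nonneg_left _ (by positivity : (0:ℝ) ≤ 3*π^2)
      have : (ub - Real.sin ub) - (ua - Real.sin ua) = L - (Real.sin ub - Real.sin ua) := by
        rw [hL]; ring
      linarith
    have s3 : 3*π^2*(2*(1 - Real.cos ub)*l) ≤ 3*π^2*(ub^2*l) := by
      apply mul_le_mul_of_nonneg_left _ (by positivity : (0:ℝ) ≤ 3*π^2)
      exact mul_le_mul_of_nonneg_right hcos2 hlpos.le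
    have k1 : 2*((ub - ua) * ub^2) ≤ 2*(ub^3 - ua^3) := by linarith only [hcube]
    have key : (2*(ub - ua)) * ub^2 ≤ (3*π^2*l) * ub^2 := by
      have e₁ : (2*(ub - ua)) * ub^2 = 2*((ub - ua) * ub^2) := by ring
      have e₂ : (3*π^2*l) * ub^2 = 3*π^2*(ub^2*l) := by ring
      rw [e₁, e₂]
      linarith only [k1, hmono2, s2, s3]
    have := le_of_mul_le_mul_right key hub2
    rw [hL]; linarith
  have hLfin : L ≤ 3*π^3/2 * Real.sin (l/2) := by
    calc L ≤ 3*π^2/2 * l := hr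
      _ ≤ 3*π^2/2 * (π * Real.sin (l/2)) := mul_le_mul_of_nonneg_left hlπs (by positivity)
      _ = 3*π^3/2 * Real.sin (l/2) := by ring
  rw [hN, hD]
  have hS2sl : 0 ≤ Real.sin m2 * Real.sin (l/2) := (mul_pos hS2_pos hsl_pos).le
  rcases le_or_gt m2 (π/2) with hm2half | hm2half
  -- Case 1 : m2 ≤ π/2
  · have hm12 : m1 ≤ m2 := by rw [hm1, hm2]; linarith
    have hS12 : Real.sin m1 ≤ Real.sin m2 :=
      Real.strictMonoOn_sin.monotoneOn (Set.mem_Icc.2 ⟨by rw [hm1]; linarith, by linarith⟩)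
        (Set.mem_Icc.2 ⟨by rw [hm2]; linarith, hm2half⟩) hm12
    have c1 : Real.sin m1 * Real.sin (L/2) ≤ Real.sin m2 * Real.sin (L/2) :=
      mul_le_mul_of_nonneg_right hS12 hsL_pos.le
    have c2 : Real.sin m2 * Real.sin (L/2) ≤ Real.sin m2 * (L/2) :=
      mul_le_mul_of_nonneg_left hsL_le hS2_pos.le
    have c3 : Real.sin m2 * L ≤ Real.sin m2 * (3*π^3/2 * Real.sin (l/2)) :=
      mul_le_mul_of_nonneg_left hLfin hS2_pos.le
    have hcoef : 3*π^3/2 ≤ 15*π^4/4 := coef1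
    have c4 : (3*π^3/2) * (Real.sin m2 * Real.sin (l/2)) ≤ (15*π^4/4) * (Real.sin m2 * Real.sin (l/2)) :=
      mul_le_mul_of_nonneg_right hcoef hS2sl
    linarith only [c1, c2, c3, c4]
  -- Case 2 : m2 > π/2
  · set v2 := π - m2 with hv2
    clear_value v2
    have hv2pos : 0 < v2 := by rw [hv2, hm2]; linarith
    have hv2half : v2 < π/2 := by rw [hv2]; linarith
    have hl2v2 : l ≤ 2*v2 := by rw [hv2, hm2, hl]; linarith
    have hS2v : 2/π * v2 ≤ Real.sin m2 := by
      have he : m2 = π - v2 := by rw [hv2]; ring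
      rw [he, Real.sin_pi_sub]
      exact Real.mul_le_sin hv2pos.le hv2half.le
    have hv2S : v2 ≤ π/2 * Real.sin m2 := by
      have h' := mul_le_mul_of_nonneg_left hS2v (by positivity : (0:ℝ) ≤ π/2)
      have he : π/2 * (2/π * v2) = v2 := by field_simp
      linarith [he ▸ h']
    have hS1v : Real.sin m1 ≤ v2 + L := by
      have h1' : Real.sin m1 ≤ π - m1 := by
        rw [← Real.sin_pi_sub]
        exact Real.sin_le (by rw [hm1]; linarith)
      have : π - m1 ≤ v2 + L := by rw [hv2, hm1, hm2]; linarith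
      linarith
    have e1 : Real.sin m1 * Real.sin (L/2) ≤ (v2 + L) * Real.sin (L/2) :=
      mul_le_mul_of_nonneg_right hS1v hsL_pos.le
    have e2 : (v2 + L) * Real.sin (L/2) ≤ (v2 + L) * (L/2) :=
      mul_le_mul_of_nonneg_left hsL_le (by linarith)
    rcases le_or_gt L (4*v2) with hLv | hLv
    -- Case 2a
    · have d3 : (v2 + L) * (L/2) ≤ (5*v2) * (L/2) :=
        mul_le_mul_of_nonneg_right (by linarith) (by linarith)
      have d4 : v2 * L ≤ (π/2 * Real.sin m2) * (3*π^3/2 * Real.sin (l/2)) :=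
        mul_le_mul hv2S hLfin hLpos.le (mul_nonneg (by positivity) hS2_pos.le)
      linarith only [e1, e2, d3, d4]
    -- Case 2b
    · have hub_eq : ub = π - v2 - l/2 := by rw [hv2, hm2, hl]; ring
      have hub_le : L ≤ ub := by rw [hL]; linarith
      have hv25 : 5*v2 < π := by
        have : ub ≤ π - v2 := by rw [hub_eq]; linarith
        linarith
      have hub_half : π/2 < ub := by rw [hub_eq]; linarith
      have hFI4l : L - (Real.sin ub - Real.sin ua) ≤ 4*l := by
        have hcos : 2*(1 - Real.cos ub) ≤ 4 := by linarith [Real.neg_one_le_cos ub]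
        have h44 : 2*(1 - Real.cos ub)*l ≤ 4*l := mul_le_mul_of_nonneg_right hcos hlpos.le
        linarith only [hC, h44]
      rcases le_or_gt (π/2) ua with hua | hua
      -- Case 2b-i
      · have hsinba : Real.sin ub ≤ Real.sin ua := by
          rw [← Real.sin_pi_sub ub, ← Real.sin_pi_sub ua]
          apply Real.strictMonoOn_sin.monotoneOn
            (Set.mem_Icc.2 ⟨by linarith, by linarith⟩)
            (Set.mem_Icc.2 ⟨by linarith, by linarith⟩) (by linarith)
        have hL4l : L ≤ 4*l := by linarith
        have f3 : (v2 + L) * (L/2) ≤ (v2 + L) * L :=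
          mul_le_mul_of_nonneg_left (by linarith) (by linarith)
        have f4 : (v2 + L) * L ≤ (9*v2) * (4*l) :=
          mul_le_mul (by linarith) hL4l hLpos.le (by linarith)
        have f5 : v2 * l ≤ (π/2 * Real.sin m2) * (π * Real.sin (l/2)) :=
          mul_le_mul hv2S hlπs hlpos.le (mul_nonneg (by positivity) hS2_pos.le)
        have hcoef : 18*π^2 ≤ 15*π^4/4 := coef2
        have f6 : (18*π^2) * (Real.sin m2 * Real.sin (l/2)) ≤ (15*π^4/4) * (Real.sin m2 * Real.sin (l/2)) :=
          mul_le_mul_of_nonneg_right hcoef hS2sl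
        linarith only [e1, e2, f3, f4, f5, f6]
      -- Case 2b-ii
      · have hlipua : Real.sin (π/2) - Real.sin ua ≤ π/2 - ua := sin_lip' hua.le (by linarith)
        rw [Real.sin_pi_div_two] at hlipua
        have hub_half_le : ub - π/2 ≤ 4*l := by
          have hsub : Real.sin ub ≤ 1 := Real.sin_le_one _
          linarith
        have hlge' : π/15 ≤ l := by rw [hub_eq] at hub_half_le; linarith
        have hv220 : π/20 ≤ v2 := by linarith
        have hS210 : 1/10 ≤ Real.sin m2 := by
          have h' := mul_le_mul_of_nonneg_left hv220 (by positivity : (0:ℝ) ≤ 2/π)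
          have he : 2/π * (π/20) = 1/10 := by field_simp; ring
          linarith [he ▸ h']
        have hsl15 : 1/15 ≤ Real.sin (l/2) := by
          have h' : (π/15)/π ≤ l/π := by gcongr
          have he : (π/15)/π = 1/15 := by field_simp
          linarith [he ▸ h']
        have hprod : 1/150 ≤ Real.sin m2 * Real.sin (l/2) :=
          le_trans (by norm_num) (mul_le_mul hS210 hsl15 (by norm_num) hS2_pos.le)
        have hfin : (81:ℝ) ≤ π^4 := pi4_ge
        have hbig : 81 * (1/150) ≤ π^4 * (Real.sin m2 * Real.sin (l/2)) :=
          mul_le_mul hfin hprod (by norm_num) (by positivity)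
        have hp : 0 ≤ (1 - Real.sin m1)*Real.sin (L/2) :=
          mul_nonneg (by linarith) hsL_pos.le
        have hNle : 2 * Real.sin m1 * Real.sin (L/2) ≤ 2 := by
          linarith only [hp, hsL_le1]
        linarith only [hbig, hNle]

lemma endgame_lower (ua ub uc : ℝ) (h0 : 0 ≤ ua) (h1 : ua < ub) (h2 : ub < uc)
    (h3 : uc ≤ π) (hll : uc - ub ≤ ub - ua) :
    2/(3*π) * (Real.cos ub - Real.cos uc) ≤ Real.cos ua - Real.cos ub := by
  have hπ := Real.pi_pos
  set L := ub - ua with hL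
  set l := uc - ub with hl
  have hLpos : 0 < L := by simp [hL]; linarith
  have hlpos : 0 < l := by simp [hl]; linarith
  have hLπ : L ≤ π := by simp [hL]; linarith
  set m1 := (ua+ub)/2 with hm1
  set m2 := (ub+uc)/2 with hm2
  have hN : Real.cos ua - Real.cos ub = 2 * Real.sin m1 * Real.sin (L/2) := by
    rw [Real.cos_sub_cos]
    have e1 : (ua - ub)/2 = -(L/2) := by rw [hL]; ring
    rw [e1, Real.sin_neg, hm1]; ring
  have hD : Real.cos ub - Real.cos uc = 2 * Real.sin m2 * Real.sin (l/2) := by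
    rw [Real.cos_sub_cos]
    have e1 : (ub - uc)/2 = -(l/2) := by rw [hl]; ring
    rw [e1, Real.sin_neg, hm2]; ring
  have hsL_pos : 0 < Real.sin (L/2) :=
    Real.sin_pos_of_pos_of_lt_pi (by linarith) (by linarith)
  have hsl_nonneg : 0 ≤ Real.sin (l/2) :=
    Real.sin_nonneg_of_nonneg_of_le_pi (by linarith) (by linarith)
  have hsl_le : Real.sin (l/2) ≤ Real.sin (L/2) := by
    apply (Real.strictMonoOn_sin.monotoneOn)
    · constructor <;> [linarith; linarith]
    · constructor <;> [linarith; linarith]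
    · linarith
  -- sin m1 ≥ sin (L/2)
  have hm1_ge : Real.sin (L/2) ≤ Real.sin m1 := by
    rcases le_or_gt m1 (π/2) with hm | hm
    · apply Real.strictMonoOn_sin.monotoneOn
      · constructor <;> [linarith; linarith]
      · constructor <;> [linarith; linarith]
      · rw [hm1, hL]; linarith
    · have : Real.sin m1 = Real.sin (π - m1) := (Real.sin_pi_sub m1).symm
      rw [this]
      apply Real.strictMonoOn_sin.monotoneOn
      · constructor <;> [linarith; linarith]
      · constructor <;> [linarith; linarith]
      · rw [hm1, hL]; linarith
  -- Jordan: sin(L/2) ≥ L/π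
  have hjor : 2/π * (L/2) ≤ Real.sin (L/2) := Real.mul_le_sin (by linarith) (by linarith)
  -- Lipschitz: sin m2 ≤ sin m1 + L
  have hlip : Real.sin m2 ≤ Real.sin m1 + L := by
    have hle : m1 ≤ m2 := by rw [hm1, hm2]; linarith
    have := sin_lip' hle (by rw [hm1, hm2]; linarith)
    have hdm : m2 - m1 ≤ L := by rw [hm1, hm2, hL]; linarith
    linarith
  rw [hN, hD]
  have hS1pos : 0 < Real.sin m1 := lt_of_lt_of_le hsL_pos hm1_ge
  -- D-part ≤ 2 (sin m1 + L) sin(L/2)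
  have hDle : 2 * Real.sin m2 * Real.sin (l/2) ≤ 2 * (Real.sin m1 + L) * Real.sin (L/2) := by
    have h1 : Real.sin m2 * Real.sin (l/2) ≤ (Real.sin m1 + L) * Real.sin (L/2) := by
      apply mul_le_mul hlip hsl_le hsl_nonneg (by positivity)
    linarith
  have hkey : 2/(3*π) * (2 * (Real.sin m1 + L) * Real.sin (L/2)) ≤ 2 * Real.sin m1 * Real.sin (L/2) := by
    rw [div_mul_eq_mul_div, div_le_iff₀ (by positivity)]
    have hjor' : L/π ≤ Real.sin m1 := by
      have he : 2/π * (L/2) = L/π := by ring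
      rw [he] at hjor; linarith
    have hLp : L ≤ π * Real.sin m1 := by
      rw [div_le_iff₀ hπ] at hjor'; linarith
    nlinarith [hsL_pos.le, mul_le_mul_of_nonneg_right hLp hsL_pos.le,
      Real.pi_gt_three, mul_pos hS1pos hsL_pos]
  calc 2/(3*π) * (2 * Real.sin m2 * Real.sin (l/2))
      ≤ 2/(3*π) * (2 * (Real.sin m1 + L) * Real.sin (L/2)) := by
        apply mul_le_mul_of_nonneg_left hDle (by positivity)
    _ ≤ 2 * Real.sin m1 * Real.sin (L/2) := hkey


noncomputable def Wfun : ℝ → ℝ := fun s => 1 / Real.sqrt (1 - s ^ 2)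

lemma measurable_Wfun : Measurable Wfun := by
  apply Measurable.div measurable_const
  exact Real.continuous_sqrt.measurable.comp (measurable_const.sub (measurable_id.pow_const 2))

lemma Wfun_nonneg (s : ℝ) : 0 ≤ Wfun s := by
  unfold Wfun; positivity

lemma w_int_right : IntervalIntegrable Wfun volume 0 1 := by
  have h1 : IntervalIntegrable (fun x : ℝ => x ^ (-(1/2) : ℝ)) volume 0 1 :=
    intervalIntegral.intervalIntegrable_rpow' (by norm_num)
  have h2 := (h1.comp_sub_left 1).symm
  -- h2 : IntervalIntegrable (fun x => (1 - x) ^ (-(1/2))) volume 0 1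
  simp only [sub_zero, sub_self] at h2
  apply h2.mono_fun (measurable_Wfun.aestronglyMeasurable.restrict)
  filter_upwards [ae_restrict_mem measurableSet_uIoc] with s hs
  rw [Set.uIoc_of_le (by norm_num : (0:ℝ) ≤ 1)] at hs
  have hs0 : 0 < s := hs.1
  have hs1 : s ≤ 1 := hs.2
  have h1s : 0 ≤ 1 - s := by linarith
  have hrw : (1 - s) ^ (-(1/2) : ℝ) = 1 / Real.sqrt (1 - s) := by
    rw [Real.rpow_neg h1s, Real.sqrt_eq_rpow]; norm_num
  have hmono : Real.sqrt (1 - s) ≤ Real.sqrt (1 - s ^ 2) := by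
    apply Real.sqrt_le_sqrt; nlinarith
  have hWle : Wfun s ≤ 1 / Real.sqrt (1 - s) := by
    unfold Wfun
    rcases eq_or_lt_of_le (Real.sqrt_nonneg (1 - s)) with h0 | hpos
    · have hs' : s = 1 := by
        have := Real.sqrt_eq_zero'.1 h0.symm; linarith
      subst hs'; norm_num
    · exact one_div_le_one_div_of_le hpos hmono
  rw [Real.norm_of_nonneg (Wfun_nonneg s), Real.norm_of_nonneg (by positivity : (0:ℝ) ≤ (1 - s) ^ (-(1/2) : ℝ)), hrw]
  exact hWle

lemma w_int_left : IntervalIntegrable Wfun volume (-1) 0 := by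
  have h1 : IntervalIntegrable (fun x : ℝ => x ^ (-(1/2) : ℝ)) volume 0 1 :=
    intervalIntegral.intervalIntegrable_rpow' (by norm_num)
  have h2 := h1.comp_add_right 1
  simp only [zero_sub, sub_self] at h2
  -- h2 : IntervalIntegrable (fun x => (x + 1) ^ (-(1/2))) volume (-1) 0
  apply h2.mono_fun (measurable_Wfun.aestronglyMeasurable.restrict)
  filter_upwards [ae_restrict_mem measurableSet_uIoc] with s hs
  rw [Set.uIoc_of_le (by norm_num : (-1:ℝ) ≤ 0)] at hs
  have hs0 : -1 < s := hs.1
  have hs1 : s ≤ 0 := hs.2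
  have h1s : 0 ≤ s + 1 := by linarith
  have hrw : (s + 1) ^ (-(1/2) : ℝ) = 1 / Real.sqrt (s + 1) := by
    rw [Real.rpow_neg h1s, Real.sqrt_eq_rpow]; norm_num
  have hmono : Real.sqrt (s + 1) ≤ Real.sqrt (1 - s ^ 2) := by
    apply Real.sqrt_le_sqrt; nlinarith
  have hWle : Wfun s ≤ 1 / Real.sqrt (s + 1) := by
    unfold Wfun
    rcases eq_or_lt_of_le (Real.sqrt_nonneg (s + 1)) with h0 | hpos
    · have hs' : s = -1 := by
        have := Real.sqrt_eq_zero'.1 h0.symm; linarith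
      subst hs'; norm_num
    · exact one_div_le_one_div_of_le hpos hmono
  rw [Real.norm_of_nonneg (Wfun_nonneg s), Real.norm_of_nonneg (by positivity : (0:ℝ) ≤ (s + 1) ^ (-(1/2) : ℝ)), hrw]
  exact hWle

lemma w_int : IntervalIntegrable Wfun volume (-1) 1 := w_int_left.trans w_int_right

lemma w_int_sub {x y : ℝ} (hx : x ∈ Set.Icc (-1:ℝ) 1) (hy : y ∈ Set.Icc (-1:ℝ) 1) :
    IntervalIntegrable Wfun volume x y := by
  apply w_int.mono_set
  rw [Set.uIcc_of_le (by norm_num : (-1:ℝ) ≤ 1)]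
  exact Set.uIcc_subset_Icc hx hy

lemma uIoc_sub_Icc {x y : ℝ} (hx : x ∈ Set.Icc (-1:ℝ) 1) (hy : y ∈ Set.Icc (-1:ℝ) 1) :
    Set.uIoc x y ⊆ Set.Icc (-1:ℝ) 1 := by
  refine subset_trans Set.Ioc_subset_Icc_self ?_
  rw [Set.Icc_subset_Icc_iff (min_le_max)]
  constructor
  · exact le_min hx.1 hy.1
  · exact max_le hx.2 hy.2

-- value of ∫ 1/√(1-s²)
lemma w_val {x y : ℝ} (hx : -1 ≤ x) (hxy : x ≤ y) (hy : y ≤ 1) :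
    ∫ s in x..y, Wfun s = Real.arcsin y - Real.arcsin x := by
  apply intervalIntegral.integral_eq_sub_of_hasDeriv_right_of_le hxy
    Real.continuous_arcsin.continuousOn
  · intro s hs
    exact ((Real.hasDerivAt_arcsin (by intro h; rw [h] at hs; exact absurd hs.1 (by linarith))
      (by intro h; rw [h] at hs; exact absurd hs.2 (by linarith))).hasDerivWithinAt)
  · exact w_int_sub (Set.mem_Icc.2 ⟨hx, le_trans hxy hy⟩) (Set.mem_Icc.2 ⟨le_trans hx hxy, hy⟩)

noncomputable def W1fun : ℝ → ℝ := fun s => (1 + s) * Wfun s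

lemma w1_int_sub {x y : ℝ} (hx : x ∈ Set.Icc (-1:ℝ) 1) (hy : y ∈ Set.Icc (-1:ℝ) 1) :
    IntervalIntegrable W1fun volume x y := by
  apply ((w_int_sub hx hy).const_mul 2).mono_fun
  · exact ((continuous_const.add continuous_id).measurable.mul measurable_Wfun).aestronglyMeasurable.restrict
  filter_upwards [ae_restrict_mem measurableSet_uIoc] with s hs
  have hs' := uIoc_sub_Icc hx hy hs
  have h1 : 0 ≤ 1 + s := by linarith [hs'.1]
  have h2 : 1 + s ≤ 2 := by linarith [hs'.2]
  simp only [W1fun]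
  rw [Real.norm_of_nonneg (mul_nonneg h1 (Wfun_nonneg s)),
    Real.norm_of_nonneg (mul_nonneg (by norm_num) (Wfun_nonneg s))]
  exact mul_le_mul_of_nonneg_right h2 (Wfun_nonneg s)

lemma w1_val {x y : ℝ} (hx : -1 ≤ x) (hxy : x ≤ y) (hy : y ≤ 1) :
    ∫ s in x..y, W1fun s
      = (Real.arcsin y - Real.sqrt (1 - y ^ 2)) - (Real.arcsin x - Real.sqrt (1 - x ^ 2)) := by
  apply intervalIntegral.integral_eq_sub_of_hasDeriv_right_of_le hxy
  · apply ContinuousOn.sub Real.continuous_arcsin.continuousOn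
    exact (Real.continuous_sqrt.comp (by continuity)).continuousOn
  · intro s hs
    have hs1 : -1 < s := lt_of_le_of_lt hx hs.1
    have hs2 : s < 1 := lt_of_lt_of_le hs.2 hy
    have hpos : 0 < 1 - s ^ 2 := by nlinarith
    have hsq : HasDerivAt (fun u : ℝ => 1 - u ^ 2) (-(2 * s)) s := by
      simpa using (hasDerivAt_pow 2 s).const_sub 1
    have hs3 : Real.sqrt (1 - s ^ 2) ≠ 0 := by positivity
    have hsqrt := hsq.sqrt (by positivity : (1:ℝ) - s ^ 2 ≠ 0)
    have harc := Real.hasDerivAt_arcsin (by linarith : s ≠ -1) (by linarith : s ≠ 1)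
    have hcomb := harc.sub hsqrt
    have heq : 1 / Real.sqrt (1 - s ^ 2) - -(2 * s) / (2 * Real.sqrt (1 - s ^ 2)) = W1fun s := by
      unfold W1fun Wfun
      have hsp : 0 < Real.sqrt (1 - s ^ 2) := Real.sqrt_pos.2 hpos
      field_simp
      ring
    rw [heq] at hcomb
    exact hcomb.hasDerivWithinAt
  · exact w1_int_sub (Set.mem_Icc.2 ⟨hx, le_trans hxy hy⟩) (Set.mem_Icc.2 ⟨le_trans hx hxy, hy⟩)

-- integrability of the weighted integrand
lemma gw_int (g : ℝ → ℝ) (hg0 : ∀ x ∈ Set.Icc (-1:ℝ) 1, 0 ≤ g x)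
    (hgmono : MonotoneOn g (Set.Icc (-1:ℝ) 1))
    {x y : ℝ} (hx : x ∈ Set.Icc (-1:ℝ) 1) (hy : y ∈ Set.Icc (-1:ℝ) 1) :
    IntervalIntegrable (fun s => g s / Real.sqrt (1 - s ^ 2)) volume x y := by
  apply ((w_int_sub hx hy).const_mul (g 1)).mono_fun
  · have hg : AEMeasurable g (volume.restrict (Set.Icc (-1:ℝ) 1)) :=
      aemeasurable_restrict_of_monotoneOn measurableSet_Icc hgmono
    have hle : volume.restrict (Set.uIoc x y) ≤ volume.restrict (Set.Icc (-1:ℝ) 1) :=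
      Measure.restrict_mono (uIoc_sub_Icc hx hy) le_rfl
    have hg' : AEMeasurable g (volume.restrict (Set.uIoc x y)) := hg.mono_measure hle
    exact (hg'.div ((Real.continuous_sqrt.measurable.comp
      (measurable_const.sub (measurable_id.pow_const 2))).aemeasurable)).aestronglyMeasurable
  · filter_upwards [ae_restrict_mem measurableSet_uIoc] with s hs
    have hs' := uIoc_sub_Icc hx hy hs
    have h0 : 0 ≤ g s := hg0 s hs'
    have h1 : g s ≤ g 1 := hgmono hs' (Set.mem_Icc.2 ⟨by norm_num, le_refl 1⟩) hs'.2
    rw [Real.norm_of_nonneg (div_nonneg h0 (Real.sqrt_nonneg _)),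
      Real.norm_of_nonneg (mul_nonneg (le_trans h0 h1) (Wfun_nonneg s))]
    unfold Wfun
    rw [div_eq_mul_one_div (g s)]
    exact mul_le_mul_of_nonneg_right h1 (by positivity)

-- concavity decay bound
lemma conc_decay (g : ℝ → ℝ) (hg0 : ∀ x ∈ Set.Icc (-1:ℝ) 1, 0 ≤ g x)
    (hgconc : ConcaveOn ℝ (Set.Icc (-1:ℝ) 1) g)
    {b s : ℝ} (hb : b ∈ Set.Icc (-1:ℝ) 1) (hb1 : -1 < b) (hs1 : -1 ≤ s) (hs2 : s ≤ b) :
    (1 + s) * g b ≤ (1 + b) * g s := by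
  have hbp : 0 < 1 + b := by linarith
  have hl1 : 0 ≤ (b - s)/(1 + b) := div_nonneg (by linarith) (by linarith)
  have hl2 : 0 ≤ (1 + s)/(1 + b) := div_nonneg (by linarith) (by linarith)
  have hsum : (b - s)/(1 + b) + (1 + s)/(1 + b) = 1 := by
    rw [← add_div, div_eq_one_iff_eq hbp.ne']; ring
  have key := hgconc.2 (Set.mem_Icc.2 ⟨le_refl (-1), by norm_num⟩) hb hl1 hl2 hsum
  have hpt : ((b - s)/(1 + b)) • (-1 : ℝ) + ((1 + s)/(1 + b)) • b = s := by
    simp only [smul_eq_mul]; field_simp [hbp.ne']; ring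
  rw [hpt] at key
  simp only [smul_eq_mul] at key
  have hgm1 : 0 ≤ g (-1) := hg0 (-1) (Set.mem_Icc.2 ⟨le_refl (-1), by norm_num⟩)
  have h2 : (1 + s)/(1 + b) * g b ≤ g s := by nlinarith [mul_nonneg hl1 hgm1]
  have := mul_le_mul_of_nonneg_left h2 hbp.le
  have he : (1 + b) * ((1 + s)/(1 + b) * g b) = (1 + s) * g b := by field_simp
  linarith [he ▸ this]

-- concavity flatness bound
lemma conc_flat (g : ℝ → ℝ) (hg0 : ∀ x ∈ Set.Icc (-1:ℝ) 1, 0 ≤ g x)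
    (hgconc : ConcaveOn ℝ (Set.Icc (-1:ℝ) 1) g)
    {a b s : ℝ} (ha : a ∈ Set.Icc (-1:ℝ) 1) (hs : s ∈ Set.Icc (-1:ℝ) 1)
    (hab : a < b) (hbs : b ≤ s) (h2 : s - a ≤ 2*(b - a)) :
    g s ≤ 2 * g b := by
  have hsa : 0 < s - a := by linarith
  have hl1 : 0 ≤ (s - b)/(s - a) := div_nonneg (by linarith) (by linarith)
  have hl2 : 0 ≤ (b - a)/(s - a) := div_nonneg (by linarith) (by linarith)
  have hsum : (s - b)/(s - a) + (b - a)/(s - a) = 1 := by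
    rw [← add_div, div_eq_one_iff_eq hsa.ne']; ring
  have key := hgconc.2 ha hs hl1 hl2 hsum
  have hpt : ((s - b)/(s - a)) • a + ((b - a)/(s - a)) • s = b := by
    simp only [smul_eq_mul]; field_simp [hsa.ne']; ring
  rw [hpt] at key
  simp only [smul_eq_mul] at key
  have hga : 0 ≤ g a := hg0 a ha
  have hgs : 0 ≤ g s := hg0 s hs
  -- (b-a)/(s-a) * g s ≤ g b
  have h3 : (b - a)/(s - a) * g s ≤ g b := by nlinarith [mul_nonneg hl1 hga]
  have h4 := mul_le_mul_of_nonneg_left h3 hsa.le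
  have he : (s - a) * ((b - a)/(s - a) * g s) = (b - a) * g s := by field_simp
  rw [he] at h4
  -- (b-a) g s ≤ (s-a) g b ≤ 2(b-a) g b
  have h5 : (s - a) * g b ≤ 2*(b - a) * g b := by
    apply mul_le_mul_of_nonneg_right h2
    have : b ∈ Set.Icc (-1:ℝ) 1 := Set.mem_Icc.2 ⟨by linarith [ha.1], by linarith [hs.2]⟩
    exact hg0 b this
  have hba : 0 < b - a := by linarith
  nlinarith

lemma K_ge_main : 15*π^4/8 ≤ 24 * π * Real.sqrt 2 * Real.sqrt (3 * π / 4 + 1) := by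
  have hπ := Real.pi_pos
  have hπ3 := Real.pi_gt_three
  have hπ315 := Real.pi_lt_d2
  have hs : Real.sqrt 2 * Real.sqrt (3 * π / 4 + 1) = Real.sqrt (3*π/2 + 2) := by
    rw [← Real.sqrt_mul (by norm_num : (0:ℝ) ≤ 2)]
    congr 1; ring
  rw [mul_assoc, hs]
  have hp2 : π^2 ≤ 9.9225 := by nlinarith
  have hp3 : π^3 ≤ 31.255875 := by nlinarith
  have hp6 : π^6 ≤ 976.9298 := by nlinarith [pow_pos Real.pi_pos 3]
  have hkey : 5*π^3/64 ≤ Real.sqrt (3*π/2 + 2) := by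
    rw [Real.le_sqrt (by positivity) (by positivity)]
    nlinarith
  have h1 : 15*π^4/8 = 24*π*(5*π^3/64) := by ring
  rw [h1]
  exact mul_le_mul_of_nonneg_left hkey (by positivity)

lemma K_ge_one : (1:ℝ) ≤ 24 * π * Real.sqrt 2 * Real.sqrt (3 * π / 4 + 1) := by
  have hπ3 := Real.pi_gt_three
  have h1 : (1:ℝ) ≤ Real.sqrt 2 := by
    rw [Real.le_sqrt (by norm_num) (by norm_num)]; norm_num
  have h2 : (1:ℝ) ≤ Real.sqrt (3 * π / 4 + 1) := by
    rw [Real.le_sqrt (by norm_num) (by positivity)]; nlinarith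
  calc (1:ℝ) = 1 * 1 * 1 := by norm_num
    _ ≤ (24*π) * Real.sqrt 2 * Real.sqrt (3 * π / 4 + 1) := by
        apply mul_le_mul (mul_le_mul (by nlinarith) h1 (by norm_num) (by nlinarith)) h2
          (by norm_num) (by positivity)

theorem stmt_17 (k : ℕ) (hk : 2 ≤ k) (g : ℝ → ℝ)
    (hg0 : ∀ x ∈ Set.Icc (-1:ℝ) 1, 0 ≤ g x)
    (hgmono : MonotoneOn g (Set.Icc (-1:ℝ) 1))
    (hgconc : ConcaveOn ℝ (Set.Icc (-1:ℝ) 1) g)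
    (hgconv : ConvexOn ℝ (Set.Ioo (-1:ℝ) 1) (fun s => g s / (1 + s)))
    (hnorm : (1 / π) * ∫ s in (-1:ℝ)..1, g s / Real.sqrt (1 - s ^ 2) = 1)
    (t : ℕ → ℝ)
    (ht0 : t 0 = -1) (htk : t k = 1)
    (htmem : ∀ j ≤ k, t j ∈ Set.Icc (-1:ℝ) 1)
    (htmono : ∀ i j : ℕ, i < j → j ≤ k → t i < t j)
    (htW : ∀ j ≤ k,
      ((k : ℝ) / π) * ∫ s in (-1:ℝ)..(t j), g s / Real.sqrt (1 - s ^ 2) = (j : ℝ))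
    :
    ∀ j : ℕ, j + 2 ≤ k →
      2 / (3 * π) ≤ (t (j + 1) - t j) / (t (j + 2) - t (j + 1)) ∧
      (t (j + 1) - t j) / (t (j + 2) - t (j + 1)) ≤
        24 * π * Real.sqrt 2 * Real.sqrt (3 * π / 4 + 1) := by
  intro j hj
  have hπ := Real.pi_pos
  have hk0 : (0:ℝ) < (k:ℝ) := by exact_mod_cast Nat.pos_of_ne_zero (by omega)
  have hja : j ≤ k := by omega
  have hjb : j + 1 ≤ k := by omega
  have hjc : j + 2 ≤ k := by omega
  have ha := htmem j hja
  have hb := htmem (j+1) hjb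
  have hc := htmem (j+2) hjc
  have hneg1 : (-1:ℝ) ∈ Set.Icc (-1:ℝ) 1 := Set.mem_Icc.2 ⟨le_refl _, by norm_num⟩
  have hab : t j < t (j+1) := htmono j (j+1) (by omega) hjb
  have hbc : t (j+1) < t (j+2) := htmono (j+1) (j+2) (by omega) hjc
  have hb1 : t (j+1) < 1 := by
    have := htmono (j+1) k (by omega) (le_refl k)
    rwa [htk] at this
  -- integral values of W
  have hGint : ∀ x y : ℝ, x ∈ Set.Icc (-1:ℝ) 1 → y ∈ Set.Icc (-1:ℝ) 1 →
      IntervalIntegrable (fun s => g s / Real.sqrt (1 - s ^ 2)) volume x y :=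
    fun x y hx hy => gw_int g hg0 hgmono hx hy
  -- mass of each interval
  have hval : ∀ i, i ≤ k → ∫ s in (-1:ℝ)..(t i), g s / Real.sqrt (1 - s ^ 2) = (i:ℝ)*π/(k:ℝ) := by
    intro i hi
    have h := htW i hi
    rw [eq_div_iff hk0.ne']
    field_simp at h
    linarith
  have hMab : ∫ s in (t j)..(t (j+1)), g s / Real.sqrt (1 - s ^ 2) = π/(k:ℝ) := by
    have e := intervalIntegral.integral_interval_sub_left
      (hGint (-1) (t (j+1)) hneg1 hb) (hGint (-1) (t j) hneg1 ha)
    rw [hval (j+1) hjb, hval j hja] at e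
    rw [← e]
    push_cast
    ring
  have hMbc : ∫ s in (t (j+1))..(t (j+2)), g s / Real.sqrt (1 - s ^ 2) = π/(k:ℝ) := by
    have e := intervalIntegral.integral_interval_sub_left
      (hGint (-1) (t (j+2)) hneg1 hc) (hGint (-1) (t (j+1)) hneg1 hb)
    rw [hval (j+2) hjc, hval (j+1) hjb] at e
    rw [← e]
    push_cast
    ring
  have hMpos : 0 < π/(k:ℝ) := by positivity
  -- arcsin bookkeeping
  have hαβ : Real.arcsin (t j) < Real.arcsin (t (j+1)) := Real.strictMonoOn_arcsin ha hb hab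
  have hβγ : Real.arcsin (t (j+1)) < Real.arcsin (t (j+2)) := Real.strictMonoOn_arcsin hb hc hbc
  -- B1 : π/k ≤ g b * L
  have hB1 : π/(k:ℝ) ≤ g (t (j+1)) * (Real.arcsin (t (j+1)) - Real.arcsin (t j)) := by
    rw [← hMab, ← w_val ha.1 hab.le hb.2, ← intervalIntegral.integral_const_mul]
    apply intervalIntegral.integral_mono_on hab.le (hGint _ _ ha hb)
      ((w_int_sub ha hb).const_mul _)
    intro s hs
    have hsmem : s ∈ Set.Icc (-1:ℝ) 1 := ⟨le_trans ha.1 hs.1, le_trans hs.2 hb.2⟩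
    have h1 : g s ≤ g (t (j+1)) := hgmono hsmem hb hs.2
    show g s / Real.sqrt (1 - s ^ 2) ≤ g (t (j+1)) * Wfun s
    unfold Wfun
    rw [div_eq_mul_one_div (g s)]
    exact mul_le_mul_of_nonneg_right h1 (by positivity)
  -- B2 : g b * ℓ ≤ π/k
  have hB2 : g (t (j+1)) * (Real.arcsin (t (j+2)) - Real.arcsin (t (j+1))) ≤ π/(k:ℝ) := by
    rw [← hMbc, ← w_val hb.1 hbc.le hc.2, ← intervalIntegral.integral_const_mul]
    apply intervalIntegral.integral_mono_on hbc.le ((w_int_sub hb hc).const_mul _)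
      (hGint _ _ hb hc)
    intro s hs
    have hsmem : s ∈ Set.Icc (-1:ℝ) 1 := ⟨le_trans hb.1 hs.1, le_trans hs.2 hc.2⟩
    have h1 : g (t (j+1)) ≤ g s := hgmono hb hsmem hs.1
    show g (t (j+1)) * Wfun s ≤ g s / Real.sqrt (1 - s ^ 2)
    unfold Wfun
    rw [div_eq_mul_one_div (g s)]
    exact mul_le_mul_of_nonneg_right h1 (by positivity)
  have hLpos : 0 < Real.arcsin (t (j+1)) - Real.arcsin (t j) := by linarith
  have hgb_nonneg : 0 ≤ g (t (j+1)) := hg0 _ hb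
  have hgb_pos : 0 < g (t (j+1)) := by
    rcases eq_or_lt_of_le hgb_nonneg with h0 | h; swap
    · exact h
    · exfalso; rw [← h0] at hB1; simp at hB1; linarith
  have hll : Real.arcsin (t (j+2)) - Real.arcsin (t (j+1))
      ≤ Real.arcsin (t (j+1)) - Real.arcsin (t j) := by
    have h := hB2.trans hB1
    exact le_of_mul_le_mul_left h hgb_pos
  -- u variables
  have hu0 : 0 ≤ Real.arcsin (t j) + π/2 := by linarith [Real.neg_pi_div_two_le_arcsin (t j)]
  have hu1 : Real.arcsin (t j) + π/2 < Real.arcsin (t (j+1)) + π/2 := by linarith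
  have hu2 : Real.arcsin (t (j+1)) + π/2 < Real.arcsin (t (j+2)) + π/2 := by linarith
  have hu3 : Real.arcsin (t (j+2)) + π/2 ≤ π := by linarith [Real.arcsin_le_pi_div_two (t (j+2))]
  have hcosa : Real.cos (Real.arcsin (t j) + π/2) = -(t j) := by
    rw [Real.cos_add_pi_div_two, Real.sin_arcsin ha.1 ha.2]
  have hcosb : Real.cos (Real.arcsin (t (j+1)) + π/2) = -(t (j+1)) := by
    rw [Real.cos_add_pi_div_two, Real.sin_arcsin hb.1 hb.2]
  have hcosc : Real.cos (Real.arcsin (t (j+2)) + π/2) = -(t (j+2)) := by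
    rw [Real.cos_add_pi_div_two, Real.sin_arcsin hc.1 hc.2]
  have hsina : Real.sin (Real.arcsin (t j) + π/2) = Real.sqrt (1 - (t j) ^ 2) := by
    rw [Real.sin_add_pi_div_two, Real.cos_arcsin]
  have hsinb : Real.sin (Real.arcsin (t (j+1)) + π/2) = Real.sqrt (1 - (t (j+1)) ^ 2) := by
    rw [Real.sin_add_pi_div_two, Real.cos_arcsin]
  have hll' : (Real.arcsin (t (j+2)) + π/2) - (Real.arcsin (t (j+1)) + π/2)
      ≤ (Real.arcsin (t (j+1)) + π/2) - (Real.arcsin (t j) + π/2) := by linarith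
  have hcb_pos : 0 < t (j+2) - t (j+1) := by linarith
  constructor
  -- lower bound
  · have hlow := endgame_lower _ _ _ hu0 hu1 hu2 hu3 hll'
    rw [hcosa, hcosb, hcosc] at hlow
    rw [le_div_iff₀ hcb_pos]
    have he : 2/(3*π) = 2/(3*π) := rfl
    calc 2/(3*π) * (t (j+2) - t (j+1)) = 2/(3*π) * (-(t (j+1)) - -(t (j+2))) := by ring
      _ ≤ -(t j) - -(t (j+1)) := hlow
      _ = t (j+1) - t j := by ring
  -- upper bound
  · rcases le_or_gt (t (j+1) - t j) (t (j+2) - t (j+1)) with hcase | hcase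
    · rw [div_le_iff₀ hcb_pos]
      have hK := K_ge_one
      nlinarith
    · -- B4 : π/k ≤ 2 g b ℓ
      have hB4 : π/(k:ℝ) ≤ 2 * g (t (j+1)) * (Real.arcsin (t (j+2)) - Real.arcsin (t (j+1))) := by
        rw [← hMbc, ← w_val hb.1 hbc.le hc.2, ← intervalIntegral.integral_const_mul]
        apply intervalIntegral.integral_mono_on hbc.le (hGint _ _ hb hc)
          ((w_int_sub hb hc).const_mul _)
        intro s hs
        have hsmem : s ∈ Set.Icc (-1:ℝ) 1 := ⟨le_trans hb.1 hs.1, le_trans hs.2 hc.2⟩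
        have h1 : g s ≤ 2 * g (t (j+1)) :=
          conc_flat g hg0 hgconc ha hsmem hab hs.1 (by linarith [hs.2])
        show g s / Real.sqrt (1 - s ^ 2) ≤ 2 * g (t (j+1)) * Wfun s
        unfold Wfun
        rw [div_eq_mul_one_div (g s)]
        exact mul_le_mul_of_nonneg_right h1 (by positivity)
      -- B3 : g b * (Φ b - Φ a) ≤ (1+b) * (π/k)
      have hB3 : g (t (j+1)) * ((Real.arcsin (t (j+1)) - Real.sqrt (1 - (t (j+1)) ^ 2))
            - (Real.arcsin (t j) - Real.sqrt (1 - (t j) ^ 2)))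
          ≤ (1 + t (j+1)) * (π/(k:ℝ)) := by
        rw [← hMab, ← w1_val ha.1 hab.le hb.2, ← intervalIntegral.integral_const_mul,
          ← intervalIntegral.integral_const_mul]
        apply intervalIntegral.integral_mono_on hab.le
          ((w1_int_sub ha hb).const_mul _) ((hGint _ _ ha hb).const_mul _)
        intro s hs
        have hsmem : s ∈ Set.Icc (-1:ℝ) 1 := ⟨le_trans ha.1 hs.1, le_trans hs.2 hb.2⟩
        have hdec := conc_decay g hg0 hgconc hb (by linarith [ha.1] : -1 < t (j+1))
          hsmem.1 hs.2
        show g (t (j+1)) * W1fun s ≤ (1 + t (j+1)) * (g s / Real.sqrt (1 - s ^ 2))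
        unfold W1fun Wfun
        rw [div_eq_mul_one_div (g s)]
        have := mul_le_mul_of_nonneg_right hdec
          (by positivity : (0:ℝ) ≤ 1 / Real.sqrt (1 - s ^ 2))
        nlinarith [this]
      -- hC
      have hCineq : ((Real.arcsin (t (j+1)) - Real.sqrt (1 - (t (j+1)) ^ 2))
            - (Real.arcsin (t j) - Real.sqrt (1 - (t j) ^ 2)))
          ≤ 2 * (1 + t (j+1)) * (Real.arcsin (t (j+2)) - Real.arcsin (t (j+1))) := by
        have h1b : 0 ≤ 1 + t (j+1) := by linarith [hb.1]
        have step := hB3.trans (mul_le_mul_of_nonneg_left hB4 h1b)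
        have := le_of_mul_le_mul_left (by nlinarith [step] :
          g (t (j+1)) * ((Real.arcsin (t (j+1)) - Real.sqrt (1 - (t (j+1)) ^ 2))
            - (Real.arcsin (t j) - Real.sqrt (1 - (t j) ^ 2)))
          ≤ g (t (j+1)) * (2 * (1 + t (j+1)) * (Real.arcsin (t (j+2)) - Real.arcsin (t (j+1)))))
          hgb_pos
        exact this
      have hC : ((Real.arcsin (t (j+1)) + π/2) - (Real.arcsin (t j) + π/2))
            - (Real.sin (Real.arcsin (t (j+1)) + π/2) - Real.sin (Real.arcsin (t j) + π/2))
          ≤ 2*(1 - Real.cos (Real.arcsin (t (j+1)) + π/2))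
            * ((Real.arcsin (t (j+2)) + π/2) - (Real.arcsin (t (j+1)) + π/2)) := by
        rw [hsina, hsinb, hcosb]
        have he1 : 2*(1 - -(t (j+1))) = 2*(1 + t (j+1)) := by ring
        rw [he1]
        calc ((Real.arcsin (t (j+1)) + π/2) - (Real.arcsin (t j) + π/2))
              - (Real.sqrt (1 - (t (j+1)) ^ 2) - Real.sqrt (1 - (t j) ^ 2))
            = ((Real.arcsin (t (j+1)) - Real.sqrt (1 - (t (j+1)) ^ 2))
              - (Real.arcsin (t j) - Real.sqrt (1 - (t j) ^ 2))) := by ring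
          _ ≤ 2 * (1 + t (j+1)) * (Real.arcsin (t (j+2)) - Real.arcsin (t (j+1))) := hCineq
          _ = 2 * (1 + t (j+1)) * ((Real.arcsin (t (j+2)) + π/2) - (Real.arcsin (t (j+1)) + π/2)) := by
              ring
      have hup := endgame_upper _ _ _ hu0 hu1 hu2 hu3 hll' hC
      rw [hcosa, hcosb, hcosc] at hup
      have hup' : t (j+1) - t j ≤ 15*π^4/8 * (t (j+2) - t (j+1)) := by
        calc t (j+1) - t j = -(t j) - -(t (j+1)) := by ring
          _ ≤ 15*π^4/8 * (-(t (j+1)) - -(t (j+2))) := hup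
          _ = 15*π^4/8 * (t (j+2) - t (j+1)) := by ring
      rw [div_le_iff₀ hcb_pos]
      have hK := K_ge_main
      nlinarith [hup', hcb_pos, hK]
end

section
/- For every j₀ ∈ {0,1,…,k-1} one has (1/4)·∑_{j=j₀+2}^{k-1} (t_{j+1} - t_j)²/(t_j - t_{j₀+1})² ≤ 872. -/
open Real MeasureTheory

lemma int_inv_sqrt (a b : ℝ) (ha : -1 < a) (hab : a ≤ b) :
    ∫ s in a..b, (Real.sqrt (1 + s))⁻¹ = 2 * Real.sqrt (1 + b) - 2 * Real.sqrt (1 + a) := by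
  have h : ∀ x ∈ Set.uIcc a b,
      HasDerivAt (fun s => 2 * Real.sqrt (1 + s)) ((Real.sqrt (1 + x))⁻¹) x := by
    intro x hx
    rw [Set.uIcc_of_le hab] at hx
    have hx0 : (0:ℝ) < 1 + x := by linarith [hx.1]
    have h1 : HasDerivAt (fun s : ℝ => 1 + s) 1 x := by
      simpa using (hasDerivAt_id x).const_add (1:ℝ)
    have h2 := (Real.hasDerivAt_sqrt (ne_of_gt hx0)).comp x h1
    have h3 := h2.const_mul (2:ℝ)
    refine h3.congr_deriv ?_
    have hs : Real.sqrt (1 + x) ≠ 0 := Real.sqrt_ne_zero'.mpr hx0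
    field_simp
  have hcont : ContinuousOn (fun s => (Real.sqrt (1 + s))⁻¹) (Set.uIcc a b) := by
    rw [Set.uIcc_of_le hab]
    apply ContinuousOn.inv₀ ((Real.continuous_sqrt.comp (by continuity)).continuousOn)
    intro x hx
    have hx0 : (0:ℝ) < 1 + x := by linarith [hx.1]
    exact Real.sqrt_ne_zero'.mpr hx0
  simpa using intervalIntegral.integral_eq_sub_of_hasDerivAt h hcont.intervalIntegrable

set_option maxHeartbeats 800000 in
lemma alg_lemma (a b c m : ℝ) (hm : 1 ≤ m) (ha : -1 < a) (hab : a < b) (hbc : b < c)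
    (h : m * (Real.sqrt (1 + c) - Real.sqrt (1 + b)) ≤ Real.sqrt (1 + b) - Real.sqrt (1 + a)) :
    (c - b) / (b - a) ≤ 4 / m := by
  set A := Real.sqrt (1 + a) with hA
  set B := Real.sqrt (1 + b) with hB
  set C := Real.sqrt (1 + c) with hC
  have hA2 : A ^ 2 = 1 + a := Real.sq_sqrt (by linarith)
  have hB2 : B ^ 2 = 1 + b := Real.sq_sqrt (by linarith)
  have hC2 : C ^ 2 = 1 + c := Real.sq_sqrt (by linarith)
  have hA0 : 0 ≤ A := Real.sqrt_nonneg _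
  have hAB : A < B := Real.sqrt_lt_sqrt (by linarith) (by linarith)
  have hBC : B < C := Real.sqrt_lt_sqrt (by linarith) (by linarith)
  have hB0 : 0 < B := lt_of_le_of_lt hA0 hAB
  have hm0 : 0 < m := by linarith
  set R := (c - b) / (b - a) with hR
  have hba : 0 < b - a := by linarith
  have hRdef : R * (b - a) = c - b := div_mul_cancel₀ _ (ne_of_gt hba)
  have hR0 : 0 ≤ R := div_nonneg (by linarith) (by linarith)
  have hCB : C ≤ B * (1 + R / 2) := by
    nlinarith [sq_nonneg (C - B * (1 + R/2)), sq_nonneg (C + B * (1 + R/2)), sq_nonneg B,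
      mul_pos hB0 (show (0:ℝ) < 1 + R/2 by linarith)]
  have h1 : m * R * ((B - A) * (B + A)) = m * ((C - B) * (C + B)) := by
    have e1 : b - a = B ^ 2 - A ^ 2 := by linarith
    have e2 : c - b = C ^ 2 - B ^ 2 := by linarith
    linear_combination m * hRdef - (m*R) * e1 + m * e2
  have h2 : m * ((C - B) * (C + B)) ≤ (B - A) * (C + B) := by
    have := mul_le_mul_of_nonneg_right h (show (0:ℝ) ≤ C + B by linarith)
    nlinarith [this]
  have h3 : m * R * (B + A) ≤ C + B := by
    have h4 : m * R * (B + A) * (B - A) ≤ (C + B) * (B - A) := by nlinarith [h1, h2]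
    exact le_of_mul_le_mul_right (by linarith [h4]) (by linarith : (0:ℝ) < B - A)
  have h5 : m * R * B ≤ B * (2 + R / 2) := by
    nlinarith [h3, hCB, mul_nonneg (mul_nonneg hm0.le hR0) hA0]
  have h6 : m * R ≤ 2 + R / 2 := le_of_mul_le_mul_right (by nlinarith [h5]) hB0
  rw [le_div_iff₀ hm0]
  nlinarith [h6, mul_nonneg hR0 (by linarith : (0:ℝ) ≤ m - 1)]

set_option maxHeartbeats 1600000 in
theorem stmt_18 (k : ℕ) (hk : 2 ≤ k) (g : ℝ → ℝ)
    (hg0 : ∀ x ∈ Set.Icc (-1:ℝ) 1, 0 ≤ g x)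
    (hgmono : MonotoneOn g (Set.Icc (-1:ℝ) 1))
    (hgconc : ConcaveOn ℝ (Set.Icc (-1:ℝ) 1) g)
    (hgconv : ConvexOn ℝ (Set.Ioo (-1:ℝ) 1) (fun s => g s / (1 + s)))
    (hnorm : (1 / π) * ∫ s in (-1:ℝ)..1, g s / Real.sqrt (1 - s ^ 2) = 1)
    (t : ℕ → ℝ)
    (ht0 : t 0 = -1) (htk : t k = 1)
    (htmem : ∀ j ≤ k, t j ∈ Set.Icc (-1:ℝ) 1)
    (htmono : ∀ i j : ℕ, i < j → j ≤ k → t i < t j)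
    (htW : ∀ j ≤ k,
      ((k : ℝ) / π) * ∫ s in (-1:ℝ)..(t j), g s / Real.sqrt (1 - s ^ 2) = (j : ℝ))
    :
    ∀ j₀ : ℕ, j₀ < k →
      (1 / 4) * ∑ j ∈ Finset.Ico (j₀ + 2) k,
        (t (j + 1) - t j) ^ 2 / (t j - t (j₀ + 1)) ^ 2 ≤ 872 := by
  intro j₀ hj₀
  have hπ : (0:ℝ) < π := Real.pi_pos
  have hk0 : (0:ℝ) < k := by positivity
  -- integrability of the density on [-1,1]
  have hInt : IntervalIntegrable (fun s => g s / Real.sqrt (1 - s ^ 2)) volume (-1) 1 := by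
    by_contra h
    rw [intervalIntegral.integral_undef h] at hnorm
    norm_num at hnorm
  have hIntSub : ∀ x y : ℝ, x ∈ Set.Icc (-1:ℝ) 1 → y ∈ Set.Icc (-1:ℝ) 1 →
      IntervalIntegrable (fun s => g s / Real.sqrt (1 - s ^ 2)) volume x y := by
    intro x y hx hy
    refine hInt.mono_set (Set.uIcc_subset_uIcc ?_ ?_) <;>
      rw [Set.uIcc_of_le (by norm_num : (-1:ℝ) ≤ 1)] <;> assumption
  have hFj : ∀ j, j ≤ k → ∫ s in (-1:ℝ)..(t j), g s / Real.sqrt (1 - s ^ 2)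
      = (j : ℝ) * π / k := by
    intro j hj
    have h := htW j hj
    have hk' : (k:ℝ) ≠ 0 := ne_of_gt hk0
    field_simp at h ⊢
    linarith [h]
  have hmass : ∀ i j : ℕ, i ≤ j → j ≤ k →
      ∫ s in (t i)..(t j), g s / Real.sqrt (1 - s ^ 2) = ((j:ℝ) - (i:ℝ)) * π / k := by
    intro i j hij hjk
    have h3 := intervalIntegral.integral_interval_sub_left
      (hIntSub (-1) (t j) (by norm_num) (htmem j hjk))
      (hIntSub (-1) (t i) (by norm_num) (htmem i (le_trans hij hjk)))
    rw [← h3, hFj j hjk, hFj i (le_trans hij hjk)]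
    ring
  -- the key per-term bound
  have key : ∀ j, j₀ + 2 ≤ j → j < k →
      (t (j + 1) - t j) ^ 2 / (t j - t (j₀ + 1)) ^ 2
        ≤ 16 / (((j - (j₀ + 1) : ℕ) : ℝ)) ^ 2 := by
    intro j hj2 hjk
    set a := t (j₀ + 1) with ha_def
    set b := t j with hb_def
    set c := t (j + 1) with hc_def
    have hj1k : j + 1 ≤ k := hjk
    have hjk' : j ≤ k := le_of_lt hjk
    have hj₀1 : j₀ + 1 ≤ k := by omega
    have memA : a ∈ Set.Icc (-1:ℝ) 1 := htmem (j₀+1) hj₀1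
    have memB : b ∈ Set.Icc (-1:ℝ) 1 := htmem j hjk'
    have memC : c ∈ Set.Icc (-1:ℝ) 1 := htmem (j+1) hj1k
    have ha1 : -1 < a := by rw [← ht0]; exact htmono 0 (j₀+1) (by omega) hj₀1
    have hab : a < b := htmono (j₀+1) j (by omega) hjk'
    have hbc : b < c := htmono j (j+1) (by omega) hj1k
    have hc1 : c ≤ 1 := memC.2
    have hb1 : b < 1 := lt_of_lt_of_le hbc hc1
    have hb2 : -1 < b := lt_trans ha1 hab
    set m : ℕ := j - (j₀ + 1) with hm_def
    have hm1 : 1 ≤ m := by omega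
    have hmcast : (m : ℝ) = (j:ℝ) - ((j₀:ℝ) + 1) := by
      rw [hm_def, Nat.cast_sub (by omega)]
      push_cast; ring
    have hm0 : (1:ℝ) ≤ (m:ℝ) := by exact_mod_cast hm1
    have hmassL : ∫ s in a..b, g s / Real.sqrt (1 - s ^ 2) = (m:ℝ) * π / k := by
      rw [hmass (j₀+1) j (by omega) hjk', hmcast]; push_cast; ring
    have hmassR : ∫ s in b..c, g s / Real.sqrt (1 - s ^ 2) = π / k := by
      rw [hmass j (j+1) (by omega) hj1k]; push_cast; ring
    set φb : ℝ := g b / Real.sqrt (1 - b) with hφb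
    have h1mb : (0:ℝ) < 1 - b := by linarith
    have hsqb : 0 < Real.sqrt (1 - b) := Real.sqrt_pos.mpr h1mb
    have contI : ∀ x y : ℝ, -1 < x → x ≤ y →
        IntervalIntegrable (fun s => φb * (Real.sqrt (1 + s))⁻¹) volume x y := by
      intro x y hx hxy
      apply ContinuousOn.intervalIntegrable
      apply ContinuousOn.mul continuousOn_const
      apply ContinuousOn.inv₀ ((Real.continuous_sqrt.comp (by continuity)).continuousOn)
      intro s hs
      rw [Set.uIcc_of_le hxy] at hs
      have hx0 : (0:ℝ) < 1 + s := by linarith [hs.1]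
      exact Real.sqrt_ne_zero'.mpr hx0
    have hsplit : ∀ s : ℝ, -1 < s → s < 1 →
        g s / Real.sqrt (1 - s ^ 2)
          = g s / Real.sqrt (1 - s) * (Real.sqrt (1 + s))⁻¹ := by
      intro s hs1 hs2
      rw [show (1:ℝ) - s ^ 2 = (1 - s) * (1 + s) from by ring,
        Real.sqrt_mul (by linarith : (0:ℝ) ≤ 1 - s), div_mul_eq_div_div, div_eq_mul_inv]
    -- comparison on [a, b]
    have compL : ∫ s in a..b, g s / Real.sqrt (1 - s ^ 2)
        ≤ ∫ s in a..b, φb * (Real.sqrt (1 + s))⁻¹ := by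
      apply intervalIntegral.integral_mono_on hab.le (hIntSub a b memA memB)
        (contI a b ha1 hab.le)
      intro s hs
      have hs1 : -1 < s := lt_of_lt_of_le ha1 hs.1
      have hs2 : s < 1 := lt_of_le_of_lt hs.2 hb1
      have hsmem : s ∈ Set.Icc (-1:ℝ) 1 := ⟨hs1.le, hs2.le⟩
      have hsqs : 0 < Real.sqrt (1 + s) := Real.sqrt_pos.mpr (by linarith)
      rw [hsplit s hs1 hs2]
      apply mul_le_mul_of_nonneg_right _ (inv_nonneg.mpr hsqs.le)
      exact div_le_div₀ (hg0 b memB) (hgmono hsmem memB hs.2) hsqb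
        (Real.sqrt_le_sqrt (by linarith [hs.2]))
    -- comparison on [b, c]
    have compR : ∫ s in b..c, φb * (Real.sqrt (1 + s))⁻¹
        ≤ ∫ s in b..c, g s / Real.sqrt (1 - s ^ 2) := by
      apply intervalIntegral.integral_mono_ae_restrict hbc.le (contI b c hb2 hbc.le)
        (hIntSub b c memB memC)
      have hne : ∀ᵐ s ∂(volume.restrict (Set.Icc b c)), s ≠ (1:ℝ) := by
        apply ae_restrict_of_ae
        refine ae_iff.mpr ?_
        have : {s : ℝ | ¬ s ≠ 1} = {(1:ℝ)} := by ext x; simp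
        rw [this]
        exact Real.volume_singleton
      filter_upwards [hne, ae_restrict_mem measurableSet_Icc] with s hsne hs
      have hs1 : -1 < s := lt_of_lt_of_le hb2 hs.1
      have hs2 : s < 1 := lt_of_le_of_ne (le_trans hs.2 hc1) hsne
      have hsmem : s ∈ Set.Icc (-1:ℝ) 1 := ⟨hs1.le, hs2.le⟩
      have hsqs : 0 < Real.sqrt (1 + s) := Real.sqrt_pos.mpr (by linarith)
      rw [hsplit s hs1 hs2]
      apply mul_le_mul_of_nonneg_right _ (inv_nonneg.mpr hsqs.le)
      exact div_le_div₀ (hg0 s hsmem) (hgmono memB hsmem hs.1)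
        (Real.sqrt_pos.mpr (by linarith)) (Real.sqrt_le_sqrt (by linarith [hs.1]))
    -- compute the comparison integrals
    have intL : ∫ s in a..b, φb * (Real.sqrt (1 + s))⁻¹
        = φb * (2 * Real.sqrt (1 + b) - 2 * Real.sqrt (1 + a)) := by
      rw [intervalIntegral.integral_const_mul, int_inv_sqrt a b ha1 hab.le]
    have intR : ∫ s in b..c, φb * (Real.sqrt (1 + s))⁻¹
        = φb * (2 * Real.sqrt (1 + c) - 2 * Real.sqrt (1 + b)) := by
      rw [intervalIntegral.integral_const_mul, int_inv_sqrt b c hb2 hbc.le]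
    rw [hmassL, intL] at compL
    rw [hmassR, intR] at compR
    clear_value a b c φb
    -- positivity of φb
    have hD1 : 0 < 2 * Real.sqrt (1 + b) - 2 * Real.sqrt (1 + a) := by
      have := Real.sqrt_lt_sqrt (by linarith : (0:ℝ) ≤ 1 + a) (by linarith : 1 + a < 1 + b)
      linarith
    have hmk : 0 < (m:ℝ) * π / k := by positivity
    have hφpos : 0 < φb := by
      by_contra hn
      push_neg at hn
      nlinarith [mul_nonneg (neg_nonneg.mpr hn) hD1.le]
    -- combine into hypothesis for alg_lemma
    have halg : (m:ℝ) * (Real.sqrt (1 + c) - Real.sqrt (1 + b))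
        ≤ Real.sqrt (1 + b) - Real.sqrt (1 + a) := by
      have e3 : (m:ℝ) * (φb * (2 * Real.sqrt (1 + c) - 2 * Real.sqrt (1 + b)))
          ≤ (m:ℝ) * (π / k) :=
        mul_le_mul_of_nonneg_left compR (by linarith)
      have r1 : (m:ℝ) * (φb * (2 * Real.sqrt (1 + c) - 2 * Real.sqrt (1 + b)))
          = 2 * (φb * ((m:ℝ) * (Real.sqrt (1 + c) - Real.sqrt (1 + b)))) := by ring
      have r2 : φb * (2 * Real.sqrt (1 + b) - 2 * Real.sqrt (1 + a))
          = 2 * (φb * (Real.sqrt (1 + b) - Real.sqrt (1 + a))) := by ring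
      have r3 : (m:ℝ) * (π / k) = (m:ℝ) * π / k := by ring
      rw [r1, r3] at e3
      rw [r2] at compL
      have e4 : φb * ((m:ℝ) * (Real.sqrt (1 + c) - Real.sqrt (1 + b)))
          ≤ φb * (Real.sqrt (1 + b) - Real.sqrt (1 + a)) := by linarith [e3, compL]
      exact le_of_mul_le_mul_left e4 hφpos
    have hR := alg_lemma a b c (m:ℝ) hm0 ha1 hab hbc halg
    have hR0 : 0 ≤ (c - b) / (b - a) := div_nonneg (by linarith) (by linarith)
    have := pow_le_pow_left₀ hR0 hR 2
    calc (c - b) ^ 2 / (b - a) ^ 2 = ((c - b) / (b - a)) ^ 2 := by rw [div_pow]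
      _ ≤ (4 / (m:ℝ)) ^ 2 := this
      _ = 16 / (m:ℝ) ^ 2 := by rw [div_pow]; norm_num
  -- sum the bounds
  have hsum : ∑ j ∈ Finset.Ico (j₀ + 2) k,
      (t (j + 1) - t j) ^ 2 / (t j - t (j₀ + 1)) ^ 2 ≤ 32 := by
    have step1 : ∑ j ∈ Finset.Ico (j₀ + 2) k,
        (t (j + 1) - t j) ^ 2 / (t j - t (j₀ + 1)) ^ 2
        ≤ ∑ j ∈ Finset.Ico (j₀ + 2) k,
          (32 * ((1:ℝ) / ((j - (j₀ + 1) : ℕ) : ℝ) - 1 / (((j - (j₀ + 1) : ℕ) : ℝ) + 1))) := by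
      apply Finset.sum_le_sum
      intro j hj
      rw [Finset.mem_Ico] at hj
      have h1 := key j hj.1 hj.2
      have hm1 : 1 ≤ j - (j₀ + 1) := by omega
      have hx : (1:ℝ) ≤ ((j - (j₀ + 1) : ℕ) : ℝ) := by exact_mod_cast hm1
      refine le_trans h1 ?_
      set x : ℝ := ((j - (j₀ + 1) : ℕ) : ℝ)
      have hx0 : (0:ℝ) < x := by linarith
      have e : 32 * ((1:ℝ)/x - 1/(x+1)) = 32 / (x * (x + 1)) := by
        field_simp
        ring
      rw [e, div_le_div_iff₀ (by positivity) (by positivity)]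
      nlinarith [hx, hx0]
    refine le_trans step1 ?_
    rw [Finset.sum_Ico_eq_sum_range]
    have e2 : ∀ i : ℕ, (32 * ((1:ℝ) / (((j₀ + 2 + i) - (j₀ + 1) : ℕ) : ℝ)
        - 1 / ((((j₀ + 2 + i) - (j₀ + 1) : ℕ) : ℝ) + 1)))
        = 32 * ((1:ℝ) / ((i:ℝ) + 1) - 1 / ((i:ℝ) + 1 + 1)) := by
      intro i
      have : (j₀ + 2 + i) - (j₀ + 1) = i + 1 := by omega
      rw [this]; try push_cast
      try ring
    rw [Finset.sum_congr rfl (fun i _ => e2 i)]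
    have e3 : ∑ i ∈ Finset.range (k - (j₀ + 2)),
        (32 * ((1:ℝ) / ((i:ℝ) + 1) - 1 / ((i:ℝ) + 1 + 1)))
        = 32 * ∑ i ∈ Finset.range (k - (j₀ + 2)),
          ((fun n : ℕ => (1:ℝ) / ((n:ℝ) + 1)) i - (fun n : ℕ => (1:ℝ) / ((n:ℝ) + 1)) (i + 1)) := by
      rw [Finset.mul_sum]
      apply Finset.sum_congr rfl
      intro i _
      push_cast
      ring
    rw [e3, Finset.sum_range_sub']
    have h0 : (0:ℝ) ≤ 1 / (((k - (j₀ + 2) : ℕ) : ℝ) + 1) := by positivity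
    norm_num
    linarith [h0]
  linarith [hsum]
end
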